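/- arXiv:2010.07084 — 9 statements merged into one kernel-verified Lean document; each statement's English description precedes it below -/
import Mathlib

section
/- For every natural number k ≥ 1 and every odd natural number q, the graph G_{q,2^{k-1}} is not (ℤ₂)^k-connected, where (ℤ₂)^k denotes the direct product of k copies of the cyclic group of order 2. -/
/-- A finite multigraph (no loops) given with a reference orientation:
each edge `e` is directed from `src e` to `tgt e`. -/
structure Multigraph where
  V : Type
  E : Type
  vFintype : Fintype V
  eFintype : Fintype E
  vDecEq : DecidableEq V
  eDecEq : DecidableEq E
  src : E → V
  tgt : E → V
  no_loop : ∀ e, src e ≠ tgt e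

attribute [instance] Multigraph.vFintype Multigraph.eFintype Multigraph.vDecEq Multigraph.eDecEq

namespace Multigraph

/-- The net out-flow of `f` at a vertex `v` :
the sum of `f` over edges leaving `v` minus the sum of `f` over edges entering `v`. -/
def netFlow (G : Multigraph) {Γ : Type} [AddCommGroup Γ] (f : G.E → Γ) (v : G.V) : Γ :=
  (∑ e : G.E, if G.src e = v then f e else 0) - (∑ e : G.E, if G.tgt e = v then f e else 0)

/-- `f` is a `Γ`-flow: net flow zero at every vertex. -/
def IsFlow (G : Multigraph) {Γ : Type} [AddCommGroup Γ] (f : G.E → Γ) : Prop :=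
  ∀ v : G.V, G.netFlow f v = 0

/-- `G` is `Γ`-connected: for every `β : V → Γ` summing to zero there is a
nowhere-zero `f : E → Γ` whose net flow at each vertex `v` is `β v`. -/
def GroupConnected (G : Multigraph) (Γ : Type) [AddCommGroup Γ] : Prop :=
  ∀ β : G.V → Γ, (∑ v : G.V, β v) = 0 →
    ∃ f : G.E → Γ, (∀ e, f e ≠ 0) ∧ ∀ v : G.V, G.netFlow f v = β v

/-- `G` is `Γ`-colorable: for every forbidding function `φ` on the edges there is a
coloring `c` of the vertices with `c(tgt e) - c(src e) ≠ φ e` for every edge `e`. -/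
def GroupColorable (G : Multigraph) (Γ : Type) [AddCommGroup Γ] : Prop :=
  ∀ φ : G.E → Γ, ∃ c : G.V → Γ, ∀ e : G.E, c (G.tgt e) - c (G.src e) ≠ φ e

/-- Any two vertices of `G` can be joined by a walk avoiding the edges of `D`. -/
def ConnectedAvoiding (G : Multigraph) (D : Set G.E) : Prop :=
  ∀ u v : G.V, Relation.ReflTransGen
    (fun a b => ∃ e : G.E, e ∉ D ∧
      ((G.src e = a ∧ G.tgt e = b) ∨ (G.src e = b ∧ G.tgt e = a))) u v

/-- `G` is connected and stays connected after deleting any single edge. -/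
def TwoEdgeConnected (G : Multigraph) : Prop :=
  ∀ D : Finset G.E, D.card ≤ 1 → G.ConnectedAvoiding ↑D

/-- `G` is connected and stays connected after deleting any two edges. -/
def ThreeEdgeConnected (G : Multigraph) : Prop :=
  ∀ D : Finset G.E, D.card ≤ 2 → G.ConnectedAvoiding ↑D

/-- A cycle in a multigraph: cyclically arranged distinct vertices joined by
distinct edges; since there are no loops, a cycle has length at least `2`. -/
structure Cycle (G : Multigraph) where
  n : ℕ
  two_le : 2 ≤ n
  verts : ZMod n → G.V
  edges : ZMod n → G.E
  vinj : Function.Injective verts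
  einj : Function.Injective edges
  compat : ∀ i : ZMod n,
    (G.src (edges i) = verts i ∧ G.tgt (edges i) = verts (i + 1)) ∨
    (G.src (edges i) = verts (i + 1) ∧ G.tgt (edges i) = verts i)

/-- Two edges are cycle-equivalent if every cycle containing one of them contains the other. -/
def CycleEquiv (G : Multigraph) (e₁ e₂ : G.E) : Prop :=
  ∀ C : G.Cycle, e₁ ∈ Set.range C.edges ↔ e₂ ∈ Set.range C.edges

/-- The cyclicity `q(G)` : the size of a largest cycle-equivalence class. -/
noncomputable def cyclicity (G : Multigraph) : ℕ :=
  Finset.univ.sup fun e : G.E => Nat.card {e' : G.E // G.CycleEquiv e e'}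

/-- The degree of a vertex (no loops, so each incident edge counts once). -/
noncomputable def degree (G : Multigraph) (v : G.V) : ℕ :=
  Nat.card {e : G.E // G.src e = v ∨ G.tgt e = v}

/-- The graph `G - v` obtained by deleting the vertex `v` and all incident edges. -/
def deleteVertex (G : Multigraph) (v : G.V) : Multigraph where
  V := {u : G.V // u ≠ v}
  E := {e : G.E // G.src e ≠ v ∧ G.tgt e ≠ v}
  vFintype := inferInstance
  eFintype := inferInstance
  vDecEq := inferInstance
  eDecEq := inferInstance
  src := fun e => ⟨G.src e.1, e.2.1⟩
  tgt := fun e => ⟨G.tgt e.1, e.2.2⟩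
  no_loop := fun e h => G.no_loop e.1 (congrArg Subtype.val h)

/-- The out-degree of `v` in the orientation of `G` obtained by re-orienting according
to `σ` (edge `e` keeps its direction if `σ e = true`, and is reversed otherwise). -/
noncomputable def outDeg (G : Multigraph) (σ : G.E → Bool) (v : G.V) : ℕ :=
  Nat.card {e : G.E // (σ e = true ∧ G.src e = v) ∨ (σ e = false ∧ G.tgt e = v)}

/-- A set of edges is a spanning tree if it connects all vertices and contains no cycle. -/
def IsSpanningTree (G : Multigraph) (T : Set G.E) : Prop :=
  G.ConnectedAvoiding Tᶜ ∧ ∀ C : G.Cycle, ¬ (Set.range C.edges ⊆ T)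

end Multigraph

/-- The graph `G_{q,k}` : two vertices `s = Sum.inl 0` and `t = Sum.inl 1` joined by
`q` internally disjoint paths, each of length `k`; edge `(i, j)` is the `j`-th edge
of the `i`-th path, directed from `s` towards `t`. -/
def pathsGraph (q k : ℕ) : Multigraph where
  V := Sum (Fin 2) (Fin q × Fin (k - 1))
  E := Fin q × Fin k
  vFintype := inferInstance
  eFintype := inferInstance
  vDecEq := inferInstance
  eDecEq := inferInstance
  src := fun p =>
    if h : (p.2 : ℕ) = 0 then Sum.inl 0
    else Sum.inr (p.1, ⟨(p.2 : ℕ) - 1, by have := p.2.isLt; omega⟩)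
  tgt := fun p =>
    if h : (p.2 : ℕ) = k - 1 then Sum.inl 1
    else Sum.inr (p.1, ⟨(p.2 : ℕ), by have := p.2.isLt; omega⟩)
  no_loop := by
    rintro ⟨i, j⟩ h
    dsimp only at h
    split_ifs at h with h0 h1 h1 <;>
      first
      | exact absurd (Sum.inl.inj h) (by decide)
      | exact Sum.noConfusion h
      | · have h2 := congrArg Fin.val (congrArg Prod.snd (Sum.inr.inj h))
          simp only at h2
          omega

/-- The simple sum `Π'` of a finite subset `Π` of an abelian group: all elements of the
form `α₁a₁ + ⋯ + αₖaₖ` where `Π = {a₁, …, aₖ}` and each `αᵢ ∈ {0, 1, -1}`. -/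
def simpleSum {Γ : Type} [AddCommGroup Γ] (S : Finset Γ) : Set Γ :=
  {x | ∃ α : Γ → ℤ, (∀ a, α a = 0 ∨ α a = 1 ∨ α a = -1) ∧ x = ∑ a ∈ S, α a • a}


section Aux

private lemma pg_src_eq_inl {q m : ℕ} (e : Fin q × Fin m) :
    (pathsGraph q m).src e = Sum.inl 0 ↔ (e.2 : ℕ) = 0 := by
  obtain ⟨i', j'⟩ := e
  simp only [pathsGraph]
  split_ifs with h
  · simp [h]
  · simp [h]

private lemma pg_tgt_ne_inl0 {q m : ℕ} (e : Fin q × Fin m) :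
    (pathsGraph q m).tgt e ≠ Sum.inl 0 := by
  obtain ⟨i', j'⟩ := e
  simp only [pathsGraph]
  split_ifs with h
  · simp [Fin.ext_iff]
  · simp

private lemma pg_src_eq_inr {q m : ℕ} (e : Fin q × Fin m) (i : Fin q) (j : Fin (m - 1)) :
    (pathsGraph q m).src e = Sum.inr (i, j) ↔
      e = (i, ⟨j.val + 1, by have := j.isLt; omega⟩) := by
  obtain ⟨i', j'⟩ := e
  simp only [pathsGraph]
  split_ifs with h
  · simp only [Prod.mk.injEq, Fin.ext_iff]
    constructor
    · rintro ⟨⟩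
    · rintro ⟨h1, h2⟩
      exfalso
      omega
  · simp only [Sum.inr.injEq, Prod.mk.injEq, Fin.ext_iff]
    constructor
    · rintro ⟨h1, h2⟩
      exact ⟨h1, by omega⟩
    · rintro ⟨h1, h2⟩
      exact ⟨h1, by omega⟩

private lemma pg_tgt_eq_inr {q m : ℕ} (e : Fin q × Fin m) (i : Fin q) (j : Fin (m - 1)) :
    (pathsGraph q m).tgt e = Sum.inr (i, j) ↔
      e = (i, ⟨j.val, by have := j.isLt; omega⟩) := by
  obtain ⟨i', j'⟩ := e
  simp only [pathsGraph]
  split_ifs with h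
  · simp only [Prod.mk.injEq, Fin.ext_iff]
    constructor
    · rintro ⟨⟩
    · rintro ⟨h1, h2⟩
      exfalso
      have := j.isLt
      omega
  · simp only [Sum.inr.injEq, Prod.mk.injEq, Fin.ext_iff]

end Aux

/-- For every natural number `k ≥ 1` and every odd natural number `q`,
the graph `G_{q, 2^(k-1)}` is not `(ℤ₂)^k`-connected. -/
theorem statement0 (k : ℕ) (hk : 1 ≤ k) (q : ℕ) (hq : Odd q) :
    ¬ (pathsGraph q (2 ^ (k - 1))).GroupConnected (Fin k → ZMod 2) := by
  obtain ⟨n, rfl⟩ : ∃ n, k = n + 1 := ⟨k - 1, by omega⟩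
  intro hGC
  simp only [Nat.add_sub_cancel] at hGC
  set m := 2 ^ n with hm
  have hm0 : 0 < m := Nat.pow_pos (by norm_num)
  have hcard : Fintype.card (Fin n → ZMod 2) = m := by
    simp [hm]
  let eΓ : (Fin n → ZMod 2) ≃ Fin m := Fintype.equivFinOfCardEq hcard
  -- enumeration of the subgroup H = {x | x 0 = 0}
  let s : ℕ → (Fin (n + 1) → ZMod 2) :=
    fun j => Fin.cons 0 (eΓ.symm ⟨j % m, Nat.mod_lt _ hm0⟩)
  have hs0 : ∀ j, s j 0 = 0 := fun j => rfl
  have hsurj : ∀ x : Fin (n + 1) → ZMod 2, x 0 = 0 → ∃ j < m, s j = x := by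
    intro x hx
    refine ⟨(eΓ (Fin.tail x)).val, (eΓ (Fin.tail x)).isLt, ?_⟩
    have h1 : (⟨(eΓ (Fin.tail x)).val % m, Nat.mod_lt _ hm0⟩ : Fin m) = eΓ (Fin.tail x) := by
      ext
      simp [Nat.mod_eq_of_lt (eΓ (Fin.tail x)).isLt]
    show Fin.cons 0 (eΓ.symm ⟨(eΓ (Fin.tail x)).val % m, Nat.mod_lt _ hm0⟩) = x
    rw [h1, Equiv.symm_apply_apply, ← hx, Fin.cons_self_tail]
  -- the forbidding β
  let β : (pathsGraph q m).V → (Fin (n + 1) → ZMod 2) :=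
    Sum.elim
      (fun a => if a = 0 then 0
        else -(∑ p : Fin q × Fin (m - 1), (s (p.2.val + 1) - s p.2.val)))
      (fun p => s (p.2.val + 1) - s p.2.val)
  have hβsum : (∑ v : (pathsGraph q m).V, β v) = 0 := by
    show (∑ v : Sum (Fin 2) (Fin q × Fin (m - 1)), β v) = 0
    rw [Fintype.sum_sum_type]
    simp [β, Fin.sum_univ_two]
  obtain ⟨f, hne0, hflow⟩ := hGC β hβsum
  -- net flow computations
  have hNetS : (pathsGraph q m).netFlow f (Sum.inl 0) = ∑ i : Fin q, f (i, ⟨0, hm0⟩) := by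
    unfold Multigraph.netFlow
    have h2 : (∑ e : (pathsGraph q m).E, @ite _ ((pathsGraph q m).tgt e = Sum.inl 0) ((pathsGraph q m).vDecEq _ _) (f e) 0)
        = 0 := Finset.sum_eq_zero fun e _ => if_neg (pg_tgt_ne_inl0 e)
    rw [h2, sub_zero]
    have h3 : (∑ e : (pathsGraph q m).E, @ite _ ((pathsGraph q m).src e = Sum.inl 0) ((pathsGraph q m).vDecEq _ _) (f e) 0)
        = ∑ e : Fin q × Fin m, if e.2 = (⟨0, hm0⟩ : Fin m) then f e else 0 :=
      Finset.sum_congr rfl fun e _ => by simp only [pg_src_eq_inl e, Fin.ext_iff]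
    rw [h3, Fintype.sum_prod_type]
    exact Finset.sum_congr rfl fun i _ => by rw [Finset.sum_ite_eq' Finset.univ]; simp
  have hNetInr : ∀ (i : Fin q) (j : Fin (m - 1)),
      (pathsGraph q m).netFlow f (Sum.inr (i, j)) =
        f (i, ⟨j.val + 1, by have := j.isLt; omega⟩) -
          f (i, ⟨j.val, by have := j.isLt; omega⟩) := by
    intro i j
    unfold Multigraph.netFlow
    congr 1
    · have h3 : (∑ e : (pathsGraph q m).E,
          @ite _ ((pathsGraph q m).src e = Sum.inr (i, j)) ((pathsGraph q m).vDecEq _ _) (f e) 0)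
          = ∑ e : Fin q × Fin m,
            if e = ((i, ⟨j.val + 1, by have := j.isLt; omega⟩) : Fin q × Fin m)
              then f e else 0 :=
        Finset.sum_congr rfl fun e _ => by
          by_cases h : (pathsGraph q m).src e = Sum.inr (i, j)
          · exact (if_pos h).trans (if_pos ((pg_src_eq_inr e i j).mp h)).symm
          · exact (if_neg h).trans (if_neg (mt (pg_src_eq_inr e i j).mpr h)).symm
      rw [h3]
      exact (Finset.sum_ite_eq' Finset.univ _ _).trans (if_pos (Finset.mem_univ _))
    · have h3 : (∑ e : (pathsGraph q m).E,
          @ite _ ((pathsGraph q m).tgt e = Sum.inr (i, j)) ((pathsGraph q m).vDecEq _ _) (f e) 0)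
          = ∑ e : Fin q × Fin m,
            if e = ((i, ⟨j.val, by have := j.isLt; omega⟩) : Fin q × Fin m)
              then f e else 0 :=
        Finset.sum_congr rfl fun e _ => by
          by_cases h : (pathsGraph q m).tgt e = Sum.inr (i, j)
          · exact (if_pos h).trans (if_pos ((pg_tgt_eq_inr e i j).mp h)).symm
          · exact (if_neg h).trans (if_neg (mt (pg_tgt_eq_inr e i j).mpr h)).symm
      rw [h3]
      exact (Finset.sum_ite_eq' Finset.univ _ _).trans (if_pos (Finset.mem_univ _))
  -- flow values along each path
  have key : ∀ (i : Fin q) (jv : ℕ) (h : jv < m),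
      f (i, ⟨jv, h⟩) = f (i, ⟨0, hm0⟩) + s jv - s 0 := by
    intro i jv
    induction jv with
    | zero => intro h; rw [add_sub_cancel_right]
    | succ jv ih =>
      intro h
      have hj : jv < m - 1 := by omega
      have h1 := hflow (Sum.inr (i, (⟨jv, hj⟩ : Fin (m - 1))))
      rw [hNetInr i ⟨jv, hj⟩] at h1
      have hβv : β (Sum.inr (i, (⟨jv, hj⟩ : Fin (m - 1)))) = s (jv + 1) - s jv := rfl
      rw [hβv] at h1
      have h2 : f (i, ⟨jv + 1, h⟩) - f (i, ⟨jv, by omega⟩) = s (jv + 1) - s jv := h1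
      rw [sub_eq_iff_eq_add.mp h2, ih (by omega)]
      abel
  -- every path's initial value has first coordinate 1
  have hF1 : ∀ i : Fin q, f (i, ⟨0, hm0⟩) 0 = 1 := by
    intro i
    by_contra hne
    have h0 : f (i, ⟨0, hm0⟩) 0 = 0 := by
      have h01 : ∀ x : ZMod 2, x = 0 ∨ x = 1 := by decide
      rcases h01 (f (i, ⟨0, hm0⟩) 0) with h | h
      · exact h
      · exact absurd h hne
    obtain ⟨j, hj, hsj⟩ := hsurj (s 0 - f (i, ⟨0, hm0⟩)) (by simp only [Pi.sub_apply, hs0 0, h0, sub_zero])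
    refine hne0 (i, ⟨j, hj⟩) ?_
    rw [key i j hj, hsj]
    abel
  -- contradiction at the source vertex
  have hS := hflow (Sum.inl 0)
  rw [hNetS] at hS
  have hβ0 : β (Sum.inl 0) = 0 := rfl
  rw [hβ0] at hS
  have hc := congrFun hS 0
  rw [Finset.sum_apply] at hc
  simp only [hF1] at hc
  rw [Finset.sum_const, Finset.card_univ, Fintype.card_fin, nsmul_eq_mul, mul_one] at hc
  simp only [Pi.zero_apply] at hc
  obtain ⟨t, rfl⟩ := hq
  push_cast at hc
  rw [show (2 : ZMod 2) = 0 by decide] at hc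
  simp at hc
end

section
/- For every ε > 0 there exist infinitely many primes p with the following property: there exists a graph G and a finite abelian group Γ' with |Γ'| ≥ (2 − ε)·p such that G is ℤ_p-connected but G is not Γ'-connected. -/
section NetFlow

variable {Γ : Type} [AddCommGroup Γ]

lemma sum_netFlow (G : Multigraph) (f : G.E → Γ) :
    ∑ v : G.V, G.netFlow f v = 0 := by
  unfold Multigraph.netFlow
  rw [Finset.sum_sub_distrib, Finset.sum_comm, Finset.sum_comm (t := Finset.univ (α := G.E))]
  simp [Finset.sum_ite_eq]

lemma netFlow_s {q k : ℕ} (hk : 0 < k) (f : (pathsGraph q k).E → Γ) :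
    (pathsGraph q k).netFlow f (Sum.inl 0) = ∑ i : Fin q, f (i, ⟨0, hk⟩) := by
  unfold Multigraph.netFlow pathsGraph
  dsimp only
  rw [Fintype.sum_prod_type, Fintype.sum_prod_type]
  have h1 : ∀ (i : Fin q) (j : Fin k),
      (if (if h : (j : ℕ) = 0 then (Sum.inl 0 : Sum (Fin 2) (Fin q × Fin (k-1)))
        else Sum.inr (i, ⟨(j : ℕ) - 1, by have := j.isLt; omega⟩)) = Sum.inl 0
        then f (i, j) else 0) = if j = ⟨0, hk⟩ then f (i, j) else 0 := by
    intro i j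
    by_cases h : (j : ℕ) = 0
    · simp [h, Fin.ext_iff]
    · simp [h, Fin.ext_iff]
  have h2 : ∀ (i : Fin q) (j : Fin k),
      (if (if h : (j : ℕ) = k - 1 then (Sum.inl 1 : Sum (Fin 2) (Fin q × Fin (k-1)))
        else Sum.inr (i, ⟨(j : ℕ), by have := j.isLt; omega⟩)) = Sum.inl 0
        then f (i, j) else 0) = 0 := by
    intro i j
    by_cases h : (j : ℕ) = k - 1 <;> simp [h]
  simp only [h1, h2, Finset.sum_const_zero, Finset.sum_ite_eq', Finset.mem_univ, if_true,
    sub_zero]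

lemma pathsGraph_src_eq_inr {q k : ℕ} (i : Fin q) (j : Fin k) (i₀ : Fin q) (j₀ : Fin (k-1)) :
    (pathsGraph q k).src (i, j) = Sum.inr (i₀, j₀) ↔ (i = i₀ ∧ (j : ℕ) = (j₀ : ℕ) + 1) := by
  show (if h : (j : ℕ) = 0 then (Sum.inl 0 : Sum (Fin 2) (Fin q × Fin (k-1)))
      else Sum.inr (i, ⟨(j : ℕ) - 1, by have := j.isLt; omega⟩)) = Sum.inr (i₀, j₀) ↔ _
  by_cases h : (j : ℕ) = 0
  · rw [dif_pos h]
    constructor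
    · intro hE; exact absurd hE (by simp)
    · rintro ⟨-, hj⟩; omega
  · rw [dif_neg h]
    constructor
    · intro hE
      rw [Sum.inr.injEq, Prod.ext_iff] at hE
      have hj := congrArg Fin.val hE.2
      simp only at hj
      exact ⟨hE.1, by omega⟩
    · rintro ⟨hi, hj⟩
      rw [Sum.inr.injEq, Prod.ext_iff]
      exact ⟨hi, Fin.ext (by simp; omega)⟩

lemma pathsGraph_tgt_eq_inr {q k : ℕ} (i : Fin q) (j : Fin k) (i₀ : Fin q) (j₀ : Fin (k-1)) :
    (pathsGraph q k).tgt (i, j) = Sum.inr (i₀, j₀) ↔ (i = i₀ ∧ (j : ℕ) = (j₀ : ℕ)) := by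
  show (if h : (j : ℕ) = k - 1 then (Sum.inl 1 : Sum (Fin 2) (Fin q × Fin (k-1)))
      else Sum.inr (i, ⟨(j : ℕ), by have := j.isLt; omega⟩)) = Sum.inr (i₀, j₀) ↔ _
  by_cases h : (j : ℕ) = k - 1
  · rw [dif_pos h]
    constructor
    · intro hE; exact absurd hE (by simp)
    · rintro ⟨-, hj⟩; have := j₀.isLt; omega
  · rw [dif_neg h]
    constructor
    · intro hE
      rw [Sum.inr.injEq, Prod.ext_iff] at hE
      have hj := congrArg Fin.val hE.2
      simp only at hj
      exact ⟨hE.1, by omega⟩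
    · rintro ⟨hi, hj⟩
      rw [Sum.inr.injEq, Prod.ext_iff]
      exact ⟨hi, Fin.ext (by simp; omega)⟩

lemma netFlow_internal {q k : ℕ} (f : (pathsGraph q k).E → Γ) (i₀ : Fin q) (j₀ : Fin (k-1)) :
    (pathsGraph q k).netFlow f (Sum.inr (i₀, j₀)) =
      f (i₀, ⟨(j₀ : ℕ) + 1, by have := j₀.isLt; omega⟩) -
      f (i₀, ⟨(j₀ : ℕ), by have := j₀.isLt; omega⟩) := by
  have hk : 2 ≤ k := by have := j₀.isLt; omega
  unfold Multigraph.netFlow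
  have h1 : ∀ e : (pathsGraph q k).E,
      (@ite _ ((pathsGraph q k).src e = Sum.inr (i₀, j₀)) ((pathsGraph q k).vDecEq _ _) (f e) 0) =
      @ite _ (@Eq (pathsGraph q k).E e (i₀, ⟨(j₀ : ℕ) + 1, by have := j₀.isLt; omega⟩)) ((pathsGraph q k).eDecEq _ _) (f e) 0 := by
    rintro ⟨i, j⟩
    congr 1
    change _ = (@Eq (Fin q × Fin k) (i, j) _)
    rw [eq_iff_iff, pathsGraph_src_eq_inr, Prod.ext_iff]
    simp [Fin.ext_iff]
  have h2 : ∀ e : (pathsGraph q k).E,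
      (@ite _ ((pathsGraph q k).tgt e = Sum.inr (i₀, j₀)) ((pathsGraph q k).vDecEq _ _) (f e) 0) =
      @ite _ (@Eq (pathsGraph q k).E e (i₀, ⟨(j₀ : ℕ), by have := j₀.isLt; omega⟩)) ((pathsGraph q k).eDecEq _ _) (f e) 0 := by
    rintro ⟨i, j⟩
    congr 1
    change _ = (@Eq (Fin q × Fin k) (i, j) _)
    rw [eq_iff_iff, pathsGraph_tgt_eq_inr, Prod.ext_iff]
    simp [Fin.ext_iff]
  simp only [h1, h2]
  exact congrArg₂ _ (Fintype.sum_ite_eq' _ _) (Fintype.sum_ite_eq' _ _)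

end NetFlow
open scoped Pointwise

lemma sumset_real {p : ℕ} (hp : p.Prime) :
    ∀ (n : ℕ) (A : Fin (n+1) → Finset (ZMod p)), (∀ i, (A i).Nonempty) →
      ∃ S : Finset (ZMod p),
        (∀ b ∈ S, ∃ γ : Fin (n+1) → ZMod p, (∀ i, γ i ∈ A i) ∧ ∑ i, γ i = b) ∧
        min p (∑ i, (A i).card - n) ≤ S.card := by
  intro n
  induction n with
  | zero =>
    intro A hA
    refine ⟨A 0, fun b hb => ⟨fun _ => b, fun i => by fin_cases i <;> exact hb, by simp⟩, ?_⟩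
    simp [min_le_iff]
  | succ n ih =>
    intro A hA
    obtain ⟨S, hS, hScard⟩ := ih (fun i => A i.castSucc) (fun i => hA _)
    have hSne : S.Nonempty := by
      rw [← Finset.card_pos]
      have h1 : ∀ i : Fin (n+1), 1 ≤ (A i.castSucc).card := fun i =>
        Finset.card_pos.mpr (hA _)
      have h2 : n + 1 ≤ ∑ i : Fin (n+1), (A i.castSucc).card := by
        calc n + 1 = ∑ _i : Fin (n+1), 1 := by simp
        _ ≤ _ := Finset.sum_le_sum fun i _ => h1 i
      refine lt_of_lt_of_le (lt_min hp.pos ?_) hScard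
      omega
    refine ⟨S + A (Fin.last (n+1)), ?_, ?_⟩
    · intro b hb
      rw [Finset.mem_add] at hb
      obtain ⟨x, hx, y, hy, rfl⟩ := hb
      obtain ⟨γ', hγ', hsum⟩ := hS x hx
      refine ⟨Fin.snoc γ' y, ?_, ?_⟩
      · intro i
        induction i using Fin.lastCases with
        | last => simpa using hy
        | cast j => simpa using hγ' j
      · rw [Fin.sum_univ_castSucc]
        simp [hsum]
    · have hcd := ZMod.cauchy_davenport hp hSne (hA (Fin.last (n+1)))
      have hsum : ∑ i : Fin (n+2), (A i).card =
          (∑ i : Fin (n+1), (A i.castSucc).card) + (A (Fin.last (n+1))).card := by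
        rw [Fin.sum_univ_castSucc]
      have h1 : 1 ≤ (A (Fin.last (n+1))).card := Finset.card_pos.mpr (hA _)
      rcases le_or_gt p S.card with hc | hc
      · have hpf : p ≤ S.card + (A (Fin.last (n+1))).card - 1 := by omega
        have hpa : p ≤ (S + A (Fin.last (n+1))).card := by
          calc p = min p (S.card + (A (Fin.last (n+1))).card - 1) := (min_eq_left hpf).symm
          _ ≤ _ := hcd
        exact le_trans (min_le_left _ _) hpa
      · have h3 : ∑ i : Fin (n+1), (A i.castSucc).card - n ≤ S.card := by
          rcases min_le_iff.mp (le_refl (min p (∑ i : Fin (n+1), (A i.castSucc).card - n)))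
            with h | h
          · omega
          · omega
        have h4 : ∑ i : Fin (n+2), (A i).card - (n+1) ≤
            S.card + (A (Fin.last (n+1))).card - 1 := by omega
        calc min p (∑ i : Fin (n+2), (A i).card - (n+1))
            ≤ min p (S.card + (A (Fin.last (n+1))).card - 1) := min_le_min_left _ h4
          _ ≤ _ := hcd

lemma exists_sum_eq {p : ℕ} (hp : p.Prime) (n : ℕ) (A : Fin (n+1) → Finset (ZMod p))
    (hA : ∀ i, (A i).Nonempty) (hcard : p + n ≤ ∑ i, (A i).card) (b : ZMod p) :
    ∃ γ : Fin (n+1) → ZMod p, (∀ i, γ i ∈ A i) ∧ ∑ i, γ i = b := by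
  obtain ⟨S, hS, hScard⟩ := sumset_real hp n A hA
  haveI : NeZero p := ⟨hp.pos.ne'⟩
  have : S = Finset.univ := by
    apply Finset.eq_univ_of_card
    have hc : S.card ≤ Fintype.card (ZMod p) := Finset.card_le_univ S
    rw [ZMod.card] at hc ⊢
    have hps : p ≤ ∑ i, (A i).card - n := by omega
    have := le_trans (le_of_eq (min_eq_left hps).symm) hScard
    omega
  exact hS b (this ▸ Finset.mem_univ b)
lemma pathsGraph_zmod_connected {p q k : ℕ} (hp : p.Prime) (hk : 0 < k) (hq : 0 < q)
    (hpk : k < p) (hineq : p + q ≤ q * (p - k) + 1) :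
    (pathsGraph q k).GroupConnected (ZMod p) := by
  haveI : NeZero p := ⟨hp.pos.ne'⟩
  obtain ⟨n, rfl⟩ : ∃ n, q = n + 1 := ⟨q - 1, by omega⟩
  intro β hβ
  -- partial sums along each path
  set c : Fin (n+1) → ℕ → ZMod p := fun i m =>
    ∑ j' ∈ Finset.univ.filter (fun j' : Fin (k-1) => (j' : ℕ) < m), β (Sum.inr (i, j'))
    with hc
  have hc0 : ∀ i, c i 0 = 0 := by
    intro i
    rw [hc]
    simp
  have hcstep : ∀ (i : Fin (n+1)) (j₀ : Fin (k-1)),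
      c i ((j₀ : ℕ) + 1) = c i (j₀ : ℕ) + β (Sum.inr (i, j₀)) := by
    intro i j₀
    rw [hc]
    simp only
    have hfil : Finset.univ.filter (fun j' : Fin (k-1) => (j' : ℕ) < (j₀ : ℕ) + 1) =
        insert j₀ (Finset.univ.filter (fun j' : Fin (k-1) => (j' : ℕ) < (j₀ : ℕ))) := by
      ext j'
      simp only [Finset.mem_filter, Finset.mem_univ, true_and, Finset.mem_insert, Fin.ext_iff]
      omega
    rw [hfil, Finset.sum_insert (by simp)]
    ring
  -- forbidden sets
  set T : Fin (n+1) → Finset (ZMod p) :=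
    fun i => Finset.image (fun j : Fin k => - c i (j : ℕ)) Finset.univ with hT
  set A : Fin (n+1) → Finset (ZMod p) := fun i => Finset.univ \ T i with hA
  have hTcard : ∀ i, (T i).card ≤ k := by
    intro i
    calc (T i).card ≤ (Finset.univ : Finset (Fin k)).card := Finset.card_image_le
    _ = k := by simp
  have hAcard : ∀ i, p - k ≤ (A i).card := by
    intro i
    rw [hA]
    simp only
    rw [Finset.card_sdiff_of_subset (Finset.subset_univ _)]
    have h1 := hTcard i
    have h2 : (Finset.univ : Finset (ZMod p)).card = p := by
      rw [Finset.card_univ, ZMod.card]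
    omega
  have hAne : ∀ i, (A i).Nonempty := by
    intro i
    rw [← Finset.card_pos]
    have := hAcard i
    omega
  have hsumcard : p + n ≤ ∑ i, (A i).card := by
    calc p + n ≤ (n+1) * (p - k) := by omega
    _ = ∑ _i : Fin (n+1), (p - k) := by simp [mul_comm]
    _ ≤ ∑ i, (A i).card := Finset.sum_le_sum fun i _ => hAcard i
  obtain ⟨γ, hγmem, hγsum⟩ := exists_sum_eq hp n A hAne hsumcard (β (Sum.inl 0))
  -- the flow
  refine ⟨fun e => γ e.1 + c e.1 (e.2 : ℕ), ?_, ?_⟩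
  · rintro ⟨i, j⟩ h0
    have hmem : γ i ∈ A i := hγmem i
    rw [hA] at hmem
    simp only [Finset.mem_sdiff, Finset.mem_univ, true_and] at hmem
    apply hmem
    rw [hT]
    exact Finset.mem_image.mpr ⟨j, Finset.mem_univ j, by linear_combination -h0⟩
  · have hflow_s : (pathsGraph (n+1) k).netFlow (fun e => γ e.1 + c e.1 (e.2 : ℕ))
        (Sum.inl 0) = β (Sum.inl 0) := by
      rw [netFlow_s hk]
      simp only [hc0]
      simpa using hγsum
    have hflow_int : ∀ (i : Fin (n+1)) (j₀ : Fin (k-1)),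
        (pathsGraph (n+1) k).netFlow (fun e => γ e.1 + c e.1 (e.2 : ℕ)) (Sum.inr (i, j₀)) =
        β (Sum.inr (i, j₀)) := by
      intro i j₀
      rw [netFlow_internal]
      simp only
      rw [hcstep]
      ring
    have hflow_t : (pathsGraph (n+1) k).netFlow (fun e => γ e.1 + c e.1 (e.2 : ℕ))
        (Sum.inl 1) = β (Sum.inl 1) := by
      have htot := sum_netFlow (pathsGraph (n+1) k) (fun e => γ e.1 + c e.1 (e.2 : ℕ))
      have hzero : ∑ v : (pathsGraph (n+1) k).V,
          ((pathsGraph (n+1) k).netFlow (fun e => γ e.1 + c e.1 (e.2 : ℕ)) v - β v) = 0 := by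
        rw [Finset.sum_sub_distrib, htot, hβ, sub_zero]
      have hsingle : ∀ v : (pathsGraph (n+1) k).V, v ≠ Sum.inl 1 →
          (pathsGraph (n+1) k).netFlow (fun e => γ e.1 + c e.1 (e.2 : ℕ)) v - β v = 0 := by
        have hfin : ∀ y : Fin 2, y = 0 ∨ y = 1 := by decide
        rintro (x | ⟨i, j₀⟩) hv
        · rcases hfin x with rfl | rfl
          · rw [hflow_s, sub_self]
          · exact absurd rfl hv
        · rw [hflow_int, sub_self]
      have hss := Finset.sum_eq_single_of_mem (Sum.inl 1 : (pathsGraph (n+1) k).V)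
        (Finset.mem_univ _) (fun v _ hv => hsingle v hv)
      rw [← sub_eq_zero]
      exact hss.symm.trans hzero
    have hfin : ∀ y : Fin 2, y = 0 ∨ y = 1 := by decide
    rintro (x | ⟨i, j₀⟩)
    · rcases hfin x with rfl | rfl
      · exact hflow_s
      · exact hflow_t
    · exact hflow_int i j₀
lemma pathsGraph_not_connected {q k : ℕ} (hq : Even q) (hq0 : 0 < q) (hk : 0 < k) :
    ¬ (pathsGraph q k).GroupConnected (ZMod 2 × ZMod k) := by
  haveI : NeZero k := ⟨hk.ne'⟩
  intro h
  set u : ZMod 2 × ZMod k := (0, 1) with hu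
  set w : ZMod 2 × ZMod k := (1, 0) with hw
  set β : (pathsGraph q k).V → ZMod 2 × ZMod k := fun v =>
    match v with
    | Sum.inl x => if x = 0 then w else -w - (q * (k-1)) • u
    | Sum.inr _ => u
    with hβ
  have hβsum : ∑ v : (pathsGraph q k).V, β v = 0 := by
    have e : ∑ v : (pathsGraph q k).V, β v
        = ∑ v : Sum (Fin 2) (Fin q × Fin (k-1)), β v := rfl
    rw [e, Fintype.sum_sum_type, Fin.sum_univ_two]
    dsimp only
    simp only [if_pos rfl, if_neg (by decide : ¬(1 : Fin 2) = 0)]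
    rw [Finset.sum_const, Finset.card_univ, Fintype.card_prod, Fintype.card_fin,
      Fintype.card_fin]
    abel_nf
    simp [hw]
    decide
  obtain ⟨f, hfne, hfflow⟩ := h β hβsum
  -- flow along each path
  have hstep : ∀ (i : Fin q) (j₀ : Fin (k-1)),
      f (i, ⟨(j₀ : ℕ) + 1, by have := j₀.isLt; omega⟩) =
      f (i, ⟨(j₀ : ℕ), by have := j₀.isLt; omega⟩) + u := by
    intro i j₀
    have h1 := hfflow (Sum.inr (i, j₀))
    rw [netFlow_internal] at h1
    have : β (Sum.inr (i, j₀)) = u := rfl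
    rw [this] at h1
    linear_combination h1
  have hpath : ∀ (i : Fin q) (m : ℕ) (hm : m < k),
      f (i, ⟨m, hm⟩) = f (i, ⟨0, hk⟩) + m • u := by
    intro i m
    induction m with
    | zero => intro hm; simp
    | succ m ih =>
      intro hm
      have hm' : m < k - 1 := by omega
      have hmk : m < k := by omega
      have := hstep i ⟨m, hm'⟩
      simp only at this
      rw [this, ih hmk, succ_nsmul]
      abel
  -- first coordinates are all 1
  have hfst : ∀ i : Fin q, (f (i, ⟨0, hk⟩)).1 = 1 := by
    intro i
    by_contra hne
    have h0 : (f (i, ⟨0, hk⟩)).1 = 0 := by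
      have : ∀ a : ZMod 2, a ≠ 1 → a = 0 := by decide
      exact this _ hne
    set y : ZMod k := (f (i, ⟨0, hk⟩)).2 with hy
    set m : ℕ := ((-y : ZMod k)).val with hm
    have hmk : m < k := ZMod.val_lt _
    apply hfne (i, ⟨m, hmk⟩)
    rw [hpath i m hmk]
    have hsmul : (m • u) = ((0 : ZMod 2), (m : ZMod k)) := by
      rw [hu, Prod.smul_def]
      simp [nsmul_eq_mul]
    have hcast : ((m : ℕ) : ZMod k) = -y := by
      rw [hm]
      exact ZMod.natCast_rightInverse (-y)
    rw [hsmul, hcast]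
    rw [Prod.ext_iff]
    constructor
    · simpa using h0
    · simp [hy]
  -- net flow at the source
  have hs := hfflow (Sum.inl 0)
  rw [netFlow_s hk] at hs
  have hβ0 : β (Sum.inl 0) = w := by rw [hβ]; simp
  rw [hβ0] at hs
  have hfst_sum := congrArg Prod.fst hs
  rw [Prod.fst_sum] at hfst_sum
  simp only [hfst] at hfst_sum
  rw [Finset.sum_const, Finset.card_univ, Fintype.card_fin] at hfst_sum
  have hq2 : (q : ZMod 2) = 0 := by
    obtain ⟨r, hr⟩ := hq
    rw [hr]
    push_cast
    ring_nf
    rw [show ((2 : ZMod 2)) = 0 by decide]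
    ring
  rw [nsmul_eq_mul, hq2] at hfst_sum
  exact absurd hfst_sum (by simp [hw])

/-- For every `ε > 0` there are infinitely many primes `p` for which
some graph `G` is `ℤ_p`-connected but fails to be `Γ'`-connected for some finite
abelian group `Γ'` with `|Γ'| ≥ (2 - ε)·p`. -/
theorem statement2 (ε : ℝ) (hε : 0 < ε) :
    {p : ℕ | p.Prime ∧
      ∃ (G : Multigraph) (Γ' : Type) (iΓ' : AddCommGroup Γ') (jΓ' : Fintype Γ'),
        (2 - ε) * (p : ℝ) ≤ (@Fintype.card Γ' jΓ' : ℝ) ∧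
        G.GroupConnected (ZMod p) ∧
        ¬ @Multigraph.GroupConnected G Γ' iΓ' }.Infinite := by
  set q : ℕ := 2 * (⌈(8:ℝ)/ε⌉₊ + 1) with hqdef
  have hqeven : Even q := by rw [hqdef]; exact even_two_mul _
  have hq0 : 0 < q := by omega
  have hqε : (8:ℝ)/ε ≤ q := by
    calc (8:ℝ)/ε ≤ ⌈(8:ℝ)/ε⌉₊ := Nat.le_ceil _
    _ ≤ q := by
      have : ⌈(8:ℝ)/ε⌉₊ ≤ q := by omega
      exact_mod_cast this
  set N : ℕ := ⌈(16:ℝ)/ε⌉₊ + 3*q + 10 with hNdef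
  have hinf : ({p : ℕ | p.Prime} \ Set.Iio N).Infinite :=
    Nat.infinite_setOf_prime.diff (Set.finite_Iio N)
  apply hinf.mono
  rintro p ⟨hprime, hpN⟩
  simp only [Set.mem_Iio, not_lt] at hpN
  have hpN' : N ≤ p := hpN
  have hp3q : 3*q + 10 ≤ p := by omega
  have hp16 : (16:ℝ)/ε ≤ p := by
    calc (16:ℝ)/ε ≤ ⌈(16:ℝ)/ε⌉₊ := Nat.le_ceil _
    _ ≤ p := by
      have : ⌈(16:ℝ)/ε⌉₊ ≤ N := by omega
      exact_mod_cast le_trans this hpN'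
  -- the parameters
  set d : ℕ := p / q with hd
  set k : ℕ := p - d - 2 with hkdef
  have hdr : q * d + p % q = p := Nat.div_add_mod p q
  have hrq : p % q < q := Nat.mod_lt _ hq0
  have h2d : 2 * d ≤ p := by
    have : 2 * d ≤ q * d := by
      have hq2 : 2 ≤ q := by omega
      exact Nat.mul_le_mul_right d hq2
    omega
  have hk0 : 0 < k := by omega
  have hkp : k < p := by omega
  have hpk : p - k = d + 2 := by omega
  have hineq : p + q ≤ q * (p - k) + 1 := by
    rw [hpk]
    have : q * (d + 2) = q * d + 2 * q := by ring
    omega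
  haveI : NeZero k := ⟨hk0.ne'⟩
  constructor
  · exact hprime
  refine ⟨pathsGraph q k, ZMod 2 × ZMod k, inferInstance, inferInstance, ?_, ?_, ?_⟩
  · -- cardinality bound
    have hcard : Fintype.card (ZMod 2 × ZMod k) = 2 * k := by
      rw [Fintype.card_prod, ZMod.card, ZMod.card]
    rw [hcard]
    -- now a real inequality
    have hkr : (k : ℝ) = (p : ℝ) - (d : ℝ) - 2 := by
      have h1 : (k : ℕ) = p - (d + 2) := by omega
      rw [h1, Nat.cast_sub (by omega)]
      push_cast
      ring
    have hqpos : (0:ℝ) < q := by exact_mod_cast hq0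
    have h8 : 8 ≤ (q:ℝ) * ε := by
      rw [div_le_iff₀ hε] at hqε
      linarith
    have hdq : (d:ℝ) * q ≤ p := by
      have : q * d ≤ p := by omega
      have := (Nat.cast_le (α := ℝ)).mpr this
      push_cast at this
      linarith
    have h8d : 8 * (d:ℝ) ≤ (p:ℝ) * ε := by
      have h1 : (d:ℝ) * 8 ≤ (d:ℝ) * ((q:ℝ) * ε) :=
        mul_le_mul_of_nonneg_left h8 (by positivity)
      have h2 : (d:ℝ) * ((q:ℝ) * ε) = ((d:ℝ) * q) * ε := by ring
      have h3 : ((d:ℝ) * q) * ε ≤ (p:ℝ) * ε := mul_le_mul_of_nonneg_right hdq hε.le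
      linarith
    have h16 : 16 ≤ ε * p := by
      rw [div_le_iff₀ hε] at hp16
      linarith
    push_cast
    rw [hkr]
    linarith
  · exact pathsGraph_zmod_connected hprime hk0 hq0 hkp hineq
  · exact pathsGraph_not_connected hqeven hq0 hk0
end

section
/- If a 2-edge-connected graph G is Γ-connected for a finite abelian group Γ, then |Γ| > q(G), where q(G) denotes the cyclicity of G. -/
namespace Multigraph

variable (G : Multigraph)

/-- One step of a walk avoiding `D`. -/
def Step (D : Set G.E) (a b : G.V) : Prop :=
  ∃ e : G.E, e ∉ D ∧ ((G.src e = a ∧ G.tgt e = b) ∨ (G.src e = b ∧ G.tgt e = a))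

lemma Step.symm {G : Multigraph} {D : Set G.E} {a b : G.V} (h : G.Step D a b) :
    G.Step D b a := by
  obtain ⟨e, he, h | h⟩ := h
  exacts [⟨e, he, Or.inr h⟩, ⟨e, he, Or.inl h⟩]

lemma connectedAvoiding_iff (D : Set G.E) :
    G.ConnectedAvoiding D ↔ ∀ u v : G.V, Relation.ReflTransGen (G.Step D) u v :=
  Iff.rfl

/-- The simple graph underlying `G` with the edges of `D` removed. -/
def auxGraph (D : Set G.E) : SimpleGraph G.V where
  Adj := G.Step D
  symm := ⟨fun _ _ h => h.symm⟩
  loopless := by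
    exact ⟨by rintro a ⟨e, _, h | h⟩ <;> exact G.no_loop e (h.1.trans h.2.symm)⟩

lemma getElem_idx_congr {α : Type _} (l : List α) {i j : ℕ} (h : i = j) (hi : i < l.length) :
    l[i]'hi = l[j]'(h ▸ hi) := by subst h; rfl

lemma exists_cycle (D : Set G.E) (e₀ : G.E) (he₀ : e₀ ∈ D)
    (h : Relation.ReflTransGen (G.Step D) (G.src e₀) (G.tgt e₀)) :
    ∃ C : G.Cycle, e₀ ∈ Set.range C.edges ∧ ∀ d ∈ Set.range C.edges, d = e₀ ∨ d ∉ D := by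
  classical
  have hreach : (G.auxGraph D).Reachable (G.src e₀) (G.tgt e₀) := by
    rw [SimpleGraph.reachable_iff_reflTransGen]; exact h
  obtain ⟨p⟩ := hreach
  set w := p.toPath.1 with hwdef
  have hw : w.IsPath := p.toPath.2
  have hnd : w.support.Nodup := hw.support_nodup
  have hslen : w.support.length = w.length + 1 := w.length_support
  have hdlen : w.darts.length = w.length := w.length_darts
  have h1 : 1 ≤ w.length := by
    rcases Nat.eq_zero_or_pos w.length with h0 | h0
    · exact absurd (w.eq_of_length_eq_zero h0) (G.no_loop e₀)
    · exact h0
  set n := w.length + 1 with hn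
  have h2n : 2 ≤ n := by omega
  haveI : NeZero n := ⟨by omega⟩
  haveI : Fact (1 < n) := ⟨by omega⟩
  have hvlt : ∀ i : ZMod n, i.val < w.support.length := by
    intro i; rw [hslen]; exact i.val_lt
  -- darts and support
  have hfst : ∀ (k : ℕ) (hk : k < w.darts.length),
      (w.darts[k]'hk).toProd.1 = w.support[k]'(by omega) := by
    intro k hk
    have e1 := List.getElem_of_eq w.map_fst_darts (by simpa using hk)
    rw [List.getElem_map] at e1
    rw [e1, List.getElem_dropLast]
  have hsnd : ∀ (k : ℕ) (hk : k < w.darts.length),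
      (w.darts[k]'hk).toProd.2 = w.support[k+1]'(by omega) := by
    intro k hk
    have e1 := List.getElem_of_eq w.map_snd_darts (by simpa using hk)
    rw [List.getElem_map] at e1
    rw [e1, List.getElem_tail]
  have hadj : ∀ (k : ℕ) (hk : k < w.darts.length),
      G.Step D (w.darts[k]'hk).toProd.1 (w.darts[k]'hk).toProd.2 :=
    fun k hk => (w.darts[k]'hk).adj
  set ed : ∀ k : ℕ, k < w.darts.length → G.E := fun k hk => (hadj k hk).choose with heddef
  have hed : ∀ (k : ℕ) (hk : k < w.darts.length), ed k hk ∉ D ∧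
      ((G.src (ed k hk) = w.support[k]'(by omega) ∧ G.tgt (ed k hk) = w.support[k+1]'(by omega)) ∨
       (G.src (ed k hk) = w.support[k+1]'(by omega) ∧ G.tgt (ed k hk) = w.support[k]'(by omega))) := by
    intro k hk
    obtain ⟨hD, hor⟩ := (hadj k hk).choose_spec
    refine ⟨hD, ?_⟩
    rcases hor with ⟨ha, hb⟩ | ⟨ha, hb⟩
    · exact Or.inl ⟨ha.trans (hfst k hk), hb.trans (hsnd k hk)⟩
    · exact Or.inr ⟨ha.trans (hsnd k hk), hb.trans (hfst k hk)⟩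
  have hget : ∀ (i j : ℕ) (hi : i < w.support.length) (hj : j < w.support.length),
      w.support[i]'hi = w.support[j]'hj → i = j := by
    intro i j hi hj hij
    exact (List.Nodup.getElem_inj_iff hnd).1 hij
  have hvalinj : Function.Injective (ZMod.val : ZMod n → ℕ) := ZMod.val_injective n
  have hlast : w.support[w.length]'(by omega) = G.tgt e₀ := by
    have hgl := w.getLast_support
    rw [List.getLast_eq_getElem] at hgl
    convert hgl using 2
    omega
  have hhead : w.support[0]'(by omega) = G.src e₀ := by
    rw [List.getElem_zero]
    exact w.head_support
  set vfun : ZMod n → G.V := fun i => w.support[i.val]'(hvlt i) with hvfun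
  set efun : ZMod n → G.E := fun i => if hi : i.val = w.length then e₀ else
      ed i.val (by rw [hdlen]; have := i.val_lt; omega) with hefun
  have hvinj : Function.Injective vfun := by
    intro i j hij
    exact hvalinj (hget _ _ _ _ hij)
  have heinj : Function.Injective efun := by
    intro i j hij
    rw [hefun] at hij
    dsimp only at hij
    by_cases hi : i.val = w.length <;> by_cases hj : j.val = w.length
    · exact hvalinj (hi.trans hj.symm)
    · rw [dif_pos hi, dif_neg hj] at hij
      exact absurd he₀ (hij ▸ (hed j.val _).1)
    · rw [dif_neg hi, dif_pos hj] at hij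
      exact absurd he₀ ((hij ▸ (hed i.val _).1 : e₀ ∉ D))
    · rw [dif_neg hi, dif_neg hj] at hij
      have hi' : i.val < w.darts.length := by rw [hdlen]; have := i.val_lt; omega
      have hj' : j.val < w.darts.length := by rw [hdlen]; have := j.val_lt; omega
      have hspec_i := (hed i.val hi').2
      have hspec_j := (hed j.val hj').2
      rw [hij] at hspec_i
      apply hvalinj
      rcases hspec_i with ⟨hi1, hi2⟩ | ⟨hi1, hi2⟩ <;> rcases hspec_j with ⟨hj1, hj2⟩ | ⟨hj1, hj2⟩
      · exact hget _ _ _ _ ((hi1.symm).trans hj1)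
      · have e1 := hget _ _ _ _ ((hi1.symm).trans hj1)
        have e2 := hget _ _ _ _ ((hi2.symm).trans hj2)
        omega
      · have e1 := hget _ _ _ _ ((hi1.symm).trans hj1)
        have e2 := hget _ _ _ _ ((hi2.symm).trans hj2)
        omega
      · have e1 := hget _ _ _ _ ((hi1.symm).trans hj1)
        omega
  have hcompat : ∀ i : ZMod n,
      (G.src (efun i) = vfun i ∧ G.tgt (efun i) = vfun (i + 1)) ∨
      (G.src (efun i) = vfun (i + 1) ∧ G.tgt (efun i) = vfun i) := by
    intro i
    rw [hefun, hvfun]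
    dsimp only
    by_cases hi : i.val = w.length
    · rw [dif_pos hi]
      have hv1 : (i + 1).val = 0 := by
        have hone : i = (-1 : ZMod n) := by
          apply hvalinj
          rw [hi, ZMod.val_neg_one]
        rw [hone]
        simp
      right
      constructor
      · rw [getElem_idx_congr w.support hv1 (hvlt (i+1))]
        exact hhead.symm
      · rw [getElem_idx_congr w.support hi (hvlt i)]
        exact hlast.symm
    · rw [dif_neg hi]
      have hi' : i.val < w.darts.length := by rw [hdlen]; have := i.val_lt; omega
      have hv1 : (i + 1).val = i.val + 1 := by
        rw [ZMod.val_add, ZMod.val_one, Nat.mod_eq_of_lt]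
        have := i.val_lt; omega
      have hor := (hed i.val hi').2
      rw [getElem_idx_congr w.support hv1 (hvlt (i+1))]
      exact hor
  refine ⟨⟨n, h2n, vfun, efun, hvinj, heinj, hcompat⟩, ?_, ?_⟩
  · refine ⟨(w.length : ZMod n), ?_⟩
    show efun _ = e₀
    rw [hefun]
    dsimp only
    have hv : ((w.length : ZMod n)).val = w.length := by
      rw [ZMod.val_natCast, Nat.mod_eq_of_lt]; omega
    rw [dif_pos hv]
  · rintro d ⟨i, rfl⟩
    show efun i = e₀ ∨ efun i ∉ D
    rw [hefun]
    dsimp only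
    by_cases hi : i.val = w.length
    · rw [dif_pos hi]; exact Or.inl rfl
    · rw [dif_neg hi]; exact Or.inr (hed i.val _).1

end Multigraph

namespace Multigraph

/-- The set of vertices reached from `G.src e₀` avoiding `e₀` and `e`. -/
def cutSide (G : Multigraph) (e₀ e : G.E) : Set G.V :=
  {v | Relation.ReflTransGen (G.Step {e₀, e}) (G.src e₀) v}

variable {G : Multigraph} {e₀ e e' : G.E}

lemma src_mem_cutSide : G.src e₀ ∈ G.cutSide e₀ e := Relation.ReflTransGen.refl

lemma cutSide_closed {v w : G.V} (hv : v ∈ G.cutSide e₀ e) (h : G.Step {e₀, e} v w) :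
    w ∈ G.cutSide e₀ e := Relation.ReflTransGen.tail hv h

lemma cutSide_not_cross {d : G.E} (hd : d ≠ e₀) (hd' : d ≠ e) :
    (G.src d ∈ G.cutSide e₀ e ↔ G.tgt d ∈ G.cutSide e₀ e) := by
  have hdm : d ∉ ({e₀, e} : Set G.E) := by simp [hd, hd']
  constructor
  · intro h; exact cutSide_closed h ⟨d, hdm, Or.inl ⟨rfl, rfl⟩⟩
  · intro h; exact cutSide_closed h ⟨d, hdm, Or.inr ⟨rfl, rfl⟩⟩

lemma tgt_not_mem_cutSide (hne : e ≠ e₀) (hcy : G.CycleEquiv e₀ e) :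
    G.tgt e₀ ∉ G.cutSide e₀ e := by
  intro hmem
  obtain ⟨C, h0, hall⟩ := G.exists_cycle {e₀, e} e₀ (by simp) hmem
  have he : e ∈ Set.range C.edges := (hcy C).1 h0
  rcases hall e he with h | h
  · exact hne h
  · exact h (by simp)

lemma cutSide_crosses (hG : G.TwoEdgeConnected) (hne : e ≠ e₀) (hcy : G.CycleEquiv e₀ e) :
    (G.src e ∈ G.cutSide e₀ e ∧ G.tgt e ∉ G.cutSide e₀ e) ∨
    (G.tgt e ∈ G.cutSide e₀ e ∧ G.src e ∉ G.cutSide e₀ e) := by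
  by_cases hPQ : (G.src e ∈ G.cutSide e₀ e ↔ G.tgt e ∈ G.cutSide e₀ e)
  · exfalso
    have hrtg : Relation.ReflTransGen (G.Step {e₀}) (G.src e₀) (G.tgt e₀) := by
      have h := hG {e₀} (by simp) (G.src e₀) (G.tgt e₀)
      rwa [Finset.coe_singleton] at h
    have hstay : ∀ x : G.V, Relation.ReflTransGen (G.Step {e₀}) (G.src e₀) x →
        x ∈ G.cutSide e₀ e := by
      intro x hx
      induction hx with
      | refl => exact src_mem_cutSide
      | @tail b c hab hbc ih =>
        obtain ⟨d, hd, hor⟩ := hbc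
        have hd0 : d ≠ e₀ := by simpa using hd
        by_cases hde : d = e
        · subst hde
          rcases hor with ⟨h1, h2⟩ | ⟨h1, h2⟩
          · rw [← h2]; exact hPQ.1 (h1 ▸ ih)
          · rw [← h1]; exact hPQ.2 (h2 ▸ ih)
        · exact cutSide_closed ih ⟨d, by simp [hd0, hde], hor⟩
    exact tgt_not_mem_cutSide hne hcy (hstay _ hrtg)
  · by_cases h1 : G.src e ∈ G.cutSide e₀ e
    · exact Or.inl ⟨h1, fun h2 => hPQ ⟨fun _ => h2, fun _ => h1⟩⟩
    · by_cases h2 : G.tgt e ∈ G.cutSide e₀ e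
      · exact Or.inr ⟨h2, h1⟩
      · exact absurd ⟨fun h => absurd h h1, fun h => absurd h h2⟩ hPQ

lemma cutSide_subset (h1 : G.src e' ∉ G.cutSide e₀ e) (h2 : G.tgt e' ∉ G.cutSide e₀ e) :
    G.cutSide e₀ e ⊆ G.cutSide e₀ e' := by
  intro x hx
  induction hx with
  | refl => exact src_mem_cutSide
  | @tail b c hab hbc ih =>
    obtain ⟨d, hd, hor⟩ := hbc
    have hb : b ∈ G.cutSide e₀ e := hab
    have hd0 : d ≠ e₀ := by rintro rfl; exact hd (by simp)
    have hde' : d ≠ e' := by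
      rintro rfl
      rcases hor with ⟨h1', h2'⟩ | ⟨h1', h2'⟩
      · exact h1 (h1' ▸ hb)
      · exact h2 (h2' ▸ hb)
    exact cutSide_closed ih ⟨d, by simp [hd0, hde'], hor⟩

lemma cutSide_not_both (hG : G.TwoEdgeConnected)
    (hne : e ≠ e₀) (hcy : G.CycleEquiv e₀ e)
    (hne' : e' ≠ e₀) (hcy' : G.CycleEquiv e₀ e')
    (hA1 : G.src e' ∈ G.cutSide e₀ e) (hA2 : G.tgt e' ∈ G.cutSide e₀ e)
    (hB1 : G.src e ∈ G.cutSide e₀ e') (hB2 : G.tgt e ∈ G.cutSide e₀ e') : False := by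
  have hrtg : Relation.ReflTransGen (G.Step {e₀}) (G.tgt e₀) (G.src e₀) := by
    have h := hG {e₀} (by simp) (G.tgt e₀) (G.src e₀)
    rwa [Finset.coe_singleton] at h
  have hstay : ∀ x : G.V, Relation.ReflTransGen (G.Step {e₀}) (G.tgt e₀) x →
      x ∉ G.cutSide e₀ e ∧ x ∉ G.cutSide e₀ e' := by
    intro x hx
    induction hx with
    | refl => exact ⟨tgt_not_mem_cutSide hne hcy, tgt_not_mem_cutSide hne' hcy'⟩
    | @tail b c hab hbc ih =>
      obtain ⟨d, hd, hor⟩ := hbc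
      have hd0 : d ≠ e₀ := by simpa using hd
      by_cases hde : d = e
      · subst hde
        exfalso
        rcases hor with ⟨h1', h2'⟩ | ⟨h1', h2'⟩
        · exact ih.2 (h1' ▸ hB1)
        · exact ih.2 (h2' ▸ hB2)
      · by_cases hde' : d = e'
        · subst hde'
          exfalso
          rcases hor with ⟨h1', h2'⟩ | ⟨h1', h2'⟩
          · exact ih.1 (h1' ▸ hA1)
          · exact ih.1 (h2' ▸ hA2)
        · constructor
          · intro hc
            exact ih.1 (cutSide_closed hc (Step.symm ⟨d, by simp [hd0, hde], hor⟩))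
          · intro hc
            exact ih.2 (cutSide_closed hc (Step.symm ⟨d, by simp [hd0, hde'], hor⟩))
  exact (hstay _ hrtg).1 src_mem_cutSide

lemma cutSide_chain (hG : G.TwoEdgeConnected)
    (hne : e ≠ e₀) (hcy : G.CycleEquiv e₀ e)
    (hne' : e' ≠ e₀) (hcy' : G.CycleEquiv e₀ e') (hee' : e ≠ e') :
    G.cutSide e₀ e ⊆ G.cutSide e₀ e' ∨ G.cutSide e₀ e' ⊆ G.cutSide e₀ e := by
  have hiff' : G.src e' ∈ G.cutSide e₀ e ↔ G.tgt e' ∈ G.cutSide e₀ e :=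
    cutSide_not_cross hne' (Ne.symm hee')
  have hiff : G.src e ∈ G.cutSide e₀ e' ↔ G.tgt e ∈ G.cutSide e₀ e' :=
    cutSide_not_cross hne hee'
  by_cases h1 : G.src e' ∈ G.cutSide e₀ e
  · by_cases h3 : G.src e ∈ G.cutSide e₀ e'
    · exact absurd (cutSide_not_both hG hne hcy hne' hcy' h1 (hiff'.1 h1) h3 (hiff.1 h3)) not_false
    · exact Or.inr (cutSide_subset h3 (fun h => h3 (hiff.2 h)))
  · exact Or.inl (cutSide_subset h1 (fun h => h1 (hiff'.2 h)))

lemma cutSide_ne (hG : G.TwoEdgeConnected)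
    (hne : e ≠ e₀) (hne' : e' ≠ e₀) (hcy' : G.CycleEquiv e₀ e') (hee' : e ≠ e') :
    G.cutSide e₀ e ≠ G.cutSide e₀ e' := by
  intro heq
  have hiff' : G.src e' ∈ G.cutSide e₀ e ↔ G.tgt e' ∈ G.cutSide e₀ e :=
    cutSide_not_cross hne' (Ne.symm hee')
  rw [heq] at hiff'
  rcases cutSide_crosses hG hne' hcy' with ⟨ha, hb⟩ | ⟨ha, hb⟩
  · exact hb (hiff'.1 ha)
  · exact hb (hiff'.2 ha)

end Multigraph

namespace Multigraph

variable {G : Multigraph} {e₀ e : G.E}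

open Classical in
lemma cutSum {Γ : Type} [AddCommGroup Γ] (f : G.E → Γ) (S : Set G.V) :
    (∑ v : G.V, if v ∈ S then G.netFlow f v else 0)
      = ∑ d : G.E, ((if G.src d ∈ S then f d else 0) - (if G.tgt d ∈ S then f d else 0)) := by
  have key : ∀ h : G.E → G.V, (∑ v : G.V, if v ∈ S then (∑ d : G.E, if h d = v then f d else 0) else 0)
      = ∑ d : G.E, (if h d ∈ S then f d else 0) := by
    intro h
    have h1 : ∀ v : G.V, (if v ∈ S then (∑ d : G.E, if h d = v then f d else 0) else 0)
        = ∑ d : G.E, (if h d = v then (if v ∈ S then f d else 0) else 0) := by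
      intro v
      by_cases hv : v ∈ S <;> simp [hv]
    simp_rw [h1]
    rw [Finset.sum_comm]
    congr 1
    funext d
    rw [Finset.sum_ite_eq Finset.univ (h d) (fun v => if v ∈ S then f d else 0)]
    simp
  have h2 : ∀ v : G.V, (if v ∈ S then G.netFlow f v else 0)
      = (if v ∈ S then (∑ d : G.E, if G.src d = v then f d else 0) else 0)
        - (if v ∈ S then (∑ d : G.E, if G.tgt d = v then f d else 0) else 0) := by
    intro v
    by_cases hv : v ∈ S <;> simp [hv, netFlow]
  simp_rw [h2]
  rw [Finset.sum_sub_distrib, key G.src, key G.tgt, ← Finset.sum_sub_distrib]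

open Classical in
lemma cutSide_flow (hG : G.TwoEdgeConnected) (hne : e ≠ e₀) (hcy : G.CycleEquiv e₀ e)
    {Γ : Type} [AddCommGroup Γ] (f : G.E → Γ) (β : G.V → Γ)
    (hf : ∀ v, G.netFlow f v = β v) :
    (∑ v : G.V, if v ∈ G.cutSide e₀ e then β v else 0) = f e₀ + f e ∨
    (∑ v : G.V, if v ∈ G.cutSide e₀ e then β v else 0) = f e₀ - f e := by
  have hcut := cutSum f (G.cutSide e₀ e)
  simp_rw [hf] at hcut
  set g : G.E → Γ := fun d => (if G.src d ∈ G.cutSide e₀ e then f d else 0)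
      - (if G.tgt d ∈ G.cutSide e₀ e then f d else 0) with hg
  have hzero : ∀ d ∈ Finset.univ, d ∉ ({e₀, e} : Finset G.E) → g d = 0 := by
    intro d _ hd
    simp only [Finset.mem_insert, Finset.mem_singleton] at hd
    push_neg at hd
    have hiff := cutSide_not_cross (e := e) hd.1 hd.2
    rw [hg]
    by_cases h : G.src d ∈ G.cutSide e₀ e
    · simp [h, hiff.1 h]
    · have h' : G.tgt d ∉ G.cutSide e₀ e := fun hh => h (hiff.2 hh)
      simp [h, h']
  have hsum : ∑ d : G.E, g d = ∑ d ∈ ({e₀, e} : Finset G.E), g d :=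
    (Finset.sum_subset (Finset.subset_univ _) hzero).symm
  have hpair : ∑ d ∈ ({e₀, e} : Finset G.E), g d = g e₀ + g e :=
    Finset.sum_pair (Ne.symm hne)
  have hge₀ : g e₀ = f e₀ := by
    rw [hg]
    simp [src_mem_cutSide, tgt_not_mem_cutSide hne hcy]
  rcases cutSide_crosses hG hne hcy with ⟨h1, h2⟩ | ⟨h1, h2⟩
  · left
    rw [hcut, hsum, hpair, hge₀, hg]
    simp [h1, h2]
  · right
    rw [hcut, hsum, hpair, hge₀, hg]
    simp [h1, h2, sub_eq_add_neg]

end Multigraph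

/-- If a 2-edge-connected graph `G` is `Γ`-connected for a finite abelian
group `Γ`, then `|Γ| > q(G)`, where `q(G)` is the cyclicity of `G`. -/
theorem statement3 (G : Multigraph) (hG : G.TwoEdgeConnected)
    (Γ : Type) [AddCommGroup Γ] [Fintype Γ] (h : G.GroupConnected Γ) :
    G.cyclicity < Fintype.card Γ := by
  classical
  by_contra hcon
  push_neg at hcon
  have hm1 : 1 ≤ Fintype.card Γ := Fintype.card_pos
  rcases isEmpty_or_nonempty G.E with hE | hE
  · have h0 : G.cyclicity = 0 := by
      unfold Multigraph.cyclicity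
      simp [Finset.univ_eq_empty]
    omega
  obtain ⟨e₀, -, he₀sup⟩ := Finset.exists_mem_eq_sup (Finset.univ : Finset G.E)
      Finset.univ_nonempty (fun e : G.E => Nat.card {e' : G.E // G.CycleEquiv e e'})
  set classF : Finset G.E := Finset.univ.filter (fun e' => G.CycleEquiv e₀ e') with hclassF
  have hcardeq : G.cyclicity = classF.card := by
    have h1 : G.cyclicity = Nat.card {e' : G.E // G.CycleEquiv e₀ e'} := he₀sup
    rw [h1, Nat.card_eq_fintype_card, Fintype.card_subtype]
  have he₀mem : e₀ ∈ classF := by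
    rw [hclassF]; exact Finset.mem_filter.2 ⟨Finset.mem_univ _, fun C => Iff.rfl⟩
  rcases eq_or_lt_of_le hm1 with hm1' | hm2
  · obtain ⟨f, hf0, -⟩ := h (fun _ => 0) (by simp)
    haveI : Subsingleton Γ := Fintype.card_le_one_iff_subsingleton.1 (le_of_eq hm1'.symm)
    exact hf0 e₀ (Subsingleton.elim _ _)
  set K' : Finset G.E := classF.erase e₀ with hK'
  set r := K'.card with hr
  have hrcard : classF.card = r + 1 := by
    rw [hr, hK', Finset.card_erase_of_mem he₀mem]
    have h1 : 1 ≤ classF.card := Finset.card_pos.2 ⟨e₀, he₀mem⟩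
    omega
  have hmr : Fintype.card Γ - 1 ≤ r := by omega
  have hr1 : 1 ≤ r := by omega
  have hK'mem : ∀ e ∈ K', e ≠ e₀ ∧ G.CycleEquiv e₀ e := by
    intro e he
    rw [hK'] at he
    exact ⟨Finset.ne_of_mem_erase he, (Finset.mem_filter.1 (Finset.mem_of_mem_erase he)).2⟩
  set nc : G.E → ℕ := fun e => (G.cutSide e₀ e).ncard with hnc
  have hinjOn : Set.InjOn nc ↑K' := by
    intro a ha b hb hab
    by_contra hne
    obtain ⟨ha1, ha2⟩ := hK'mem a ha
    obtain ⟨hb1, hb2⟩ := hK'mem b hb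
    have hnecs := Multigraph.cutSide_ne hG ha1 hb1 hb2 hne
    rcases Multigraph.cutSide_chain hG ha1 ha2 hb1 hb2 hne with hsub | hsub
    · exact hnecs (Set.eq_of_subset_of_ncard_le hsub (le_of_eq hab.symm) (Set.toFinite _))
    · exact hnecs (Set.eq_of_subset_of_ncard_le hsub (le_of_eq hab) (Set.toFinite _)).symm
  set keys := K'.image nc with hkeys
  have hkc : keys.card = r := by rw [hkeys, Finset.card_image_of_injOn hinjOn, hr]
  set o := keys.orderIsoOfFin hkc with ho
  have hsel : ∀ i : Fin r, ∃ ei, ei ∈ K' ∧ nc ei = ((o i : ℕ)) := by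
    intro i
    obtain ⟨ei, hmem, heq⟩ := Finset.mem_image.1 (o i).2
    exact ⟨ei, hmem, heq⟩
  set Efun : ℕ → G.E := fun k => (hsel ⟨min k (r-1), by omega⟩).choose with hEfun
  have hEspec : ∀ k : ℕ, Efun k ∈ K' ∧ nc (Efun k) = (o ⟨min k (r-1), by omega⟩ : ℕ) :=
    fun k => (hsel _).choose_spec
  set S : ℕ → Set G.V := fun k => G.cutSide e₀ (Efun k) with hS
  have hSlt : ∀ i j : ℕ, i < j → j ≤ r - 1 → S i ⊂ S j := by
    intro i j hij hjr
    have hilt : (⟨min i (r-1), by omega⟩ : Fin r) < ⟨min j (r-1), by omega⟩ := by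
      rw [Fin.mk_lt_mk]
      omega
    have hnclt : nc (Efun i) < nc (Efun j) := by
      rw [(hEspec i).2, (hEspec j).2]
      exact Subtype.coe_lt_coe.2 (o.strictMono hilt)
    obtain ⟨hi1, hi2⟩ := hK'mem _ (hEspec i).1
    obtain ⟨hj1, hj2⟩ := hK'mem _ (hEspec j).1
    have hne : Efun i ≠ Efun j := fun hh => by rw [hh] at hnclt; omega
    rcases Multigraph.cutSide_chain hG hi1 hi2 hj1 hj2 hne with hsub | hsub
    · refine HasSubset.Subset.ssubset_of_ne hsub ?_
      intro heq
      have h' : nc (Efun i) = nc (Efun j) := congrArg Set.ncard heq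
      exact absurd (h' ▸ hnclt) (lt_irrefl _)
    · exact absurd hnclt (not_lt.2 (Set.ncard_le_ncard hsub (Set.toFinite _)))
  have hSle : ∀ i j : ℕ, i ≤ j → j ≤ r - 1 → S i ⊆ S j := by
    intro i j hij hjr
    rcases eq_or_lt_of_le hij with rfl | hlt
    · exact subset_rfl
    · exact (hSlt i j hlt hjr).subset
  have hwex : ∀ k : ℕ, ∃ x : G.V, x ∈ S k ∧ (1 ≤ k → k ≤ r - 1 → x ∉ S (k-1)) := by
    intro k
    by_cases hk : 1 ≤ k ∧ k ≤ r - 1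
    · obtain ⟨x, hx1, hx2⟩ := Set.exists_of_ssubset (hSlt (k-1) k (by omega) hk.2)
      exact ⟨x, hx1, fun _ _ => hx2⟩
    · refine ⟨G.src e₀, Multigraph.src_mem_cutSide, ?_⟩
      intro h1 h2; exact absurd ⟨h1, h2⟩ hk
  set w : ℕ → G.V := fun k => (hwex k).choose with hw
  have hwS : ∀ k, w k ∈ S k := fun k => (hwex k).choose_spec.1
  have hwnot : ∀ k, 1 ≤ k → k ≤ r - 1 → w k ∉ S (k-1) := fun k => (hwex k).choose_spec.2
  have hwmem : ∀ k i : ℕ, k ≤ r - 1 → i ≤ r - 1 → (w k ∈ S i ↔ k ≤ i) := by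
    intro k i hk hi
    constructor
    · intro hmem
      by_contra hgt
      push_neg at hgt
      exact hwnot k (by omega) hk (hSle i (k-1) (by omega) (by omega) hmem)
    · intro hki; exact hSle k i hki hi (hwS k)
  have htgtS : ∀ i : ℕ, G.tgt e₀ ∉ S i := by
    intro i
    obtain ⟨h1, h2⟩ := hK'mem _ (hEspec i).1
    exact Multigraph.tgt_not_mem_cutSide h1 h2
  -- target values
  have hcardne : Fintype.card {x : Γ // x ≠ 0} ≤ r := by
    have h1 := Fintype.card_subtype_compl (fun x : Γ => x = 0)
    have h2 : Fintype.card {x : Γ // x = 0} = 1 := Fintype.card_subtype_eq (0 : Γ)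
    have h3 : Fintype.card {x : Γ // x ≠ 0} = Fintype.card Γ - 1 := by
      rw [← h2]; exact h1
    omega
  obtain ⟨ψ⟩ : Nonempty ({x : Γ // x ≠ 0} ↪ Fin r) := by
    apply Function.Embedding.nonempty_of_card_le
    simpa using hcardne
  set t : ℕ → Γ := fun k =>
    if hk : ∃ x : {x : Γ // x ≠ 0}, (ψ x : Fin r).val = k then hk.choose.1 else 0 with ht
  have hcov : ∀ x : Γ, x ≠ 0 → ∃ k, k ≤ r - 1 ∧ t k = x := by
    intro x hx
    refine ⟨(ψ ⟨x, hx⟩).val, by have := (ψ ⟨x, hx⟩).isLt; omega, ?_⟩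
    have hex : ∃ y : {x : Γ // x ≠ 0}, (ψ y : Fin r).val = (ψ ⟨x, hx⟩).val := ⟨⟨x, hx⟩, rfl⟩
    show (if hk : ∃ y : {x : Γ // x ≠ 0}, (ψ y : Fin r).val = (ψ ⟨x, hx⟩).val
        then hk.choose.1 else 0) = x
    rw [dif_pos hex]
    have hspec := hex.choose_spec
    have heq : hex.choose = ⟨x, hx⟩ := ψ.injective (Fin.val_injective hspec)
    rw [heq]
  set T' : ℕ → Γ := fun k => if k = 0 then 0 else t (k-1) with hT'
  set dfun : ℕ → Γ := fun k => T' (k+1) - T' k with hdfun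
  have htel : ∀ nn : ℕ, ∑ k ∈ Finset.range nn, dfun k = T' nn := by
    intro nn
    simp only [hdfun]
    rw [Finset.sum_range_sub T']
    have h0 : T' 0 = 0 := rfl
    rw [h0, sub_zero]
  -- the boundary function
  set β : G.V → Γ := fun v => (∑ k ∈ Finset.range r, if v = w k then dfun k else 0)
      - (if v = G.tgt e₀ then t (r-1) else 0) with hβ
  have hβsum : (∑ v : G.V, β v) = 0 := by
    rw [hβ]
    rw [Finset.sum_sub_distrib]
    rw [Finset.sum_comm]
    have h1 : ∀ k, (∑ v : G.V, if v = w k then dfun k else 0) = dfun k := by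
      intro k
      rw [Finset.sum_ite_eq' Finset.univ (w k) (fun _ => dfun k)]
      simp
    have h2 : (∑ v : G.V, if v = G.tgt e₀ then t (r-1) else 0) = t (r-1) := by
      rw [Finset.sum_ite_eq' Finset.univ (G.tgt e₀) (fun _ => t (r-1))]
      simp
    rw [Finset.sum_congr rfl (fun k _ => h1 k), h2, htel r]
    have hne0 : ¬ (r = 0) := by omega
    show (if r = 0 then (0 : Γ) else t (r-1)) - t (r-1) = 0
    rw [if_neg hne0, sub_self]
  have hcsum : ∀ i : ℕ, i ≤ r - 1 → (∑ v : G.V, if v ∈ S i then β v else 0) = t i := by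
    intro i hi
    have hsplit : ∀ v : G.V, (if v ∈ S i then β v else 0)
        = (∑ k ∈ Finset.range r, if v ∈ S i then (if v = w k then dfun k else 0) else 0)
          - (if v ∈ S i then (if v = G.tgt e₀ then t (r-1) else 0) else 0) := by
      intro v; by_cases hv : v ∈ S i <;> simp [hv, hβ]
    simp_rw [hsplit]
    rw [Finset.sum_sub_distrib]
    have hB : (∑ v : G.V, if v ∈ S i then (if v = G.tgt e₀ then t (r-1) else 0) else 0) = 0 := by
      apply Finset.sum_eq_zero
      intro v _
      by_cases hv : v ∈ S i
      · by_cases hvt : v = G.tgt e₀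
        · exact absurd (hvt ▸ hv) (htgtS i)
        · simp [hv, hvt]
      · simp [hv]
    rw [hB, sub_zero]
    rw [Finset.sum_comm]
    have hA : ∀ k ∈ Finset.range r,
        (∑ v : G.V, if v ∈ S i then (if v = w k then dfun k else 0) else 0)
          = if k ≤ i then dfun k else 0 := by
      intro k hk
      have hkr : k ≤ r - 1 := by have := Finset.mem_range.1 hk; omega
      have hswap : ∀ v : G.V, (if v ∈ S i then (if v = w k then dfun k else 0) else 0)
          = (if v = w k then (if v ∈ S i then dfun k else 0) else 0) := by
        intro v
        by_cases h1 : v ∈ S i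
        · by_cases h2 : v = w k
          · rw [if_pos h1, if_pos h2, if_pos h2, if_pos h1]
          · rw [if_pos h1, if_neg h2, if_neg h2]
        · by_cases h2 : v = w k
          · rw [if_neg h1, if_pos h2, if_neg h1]
          · rw [if_neg h1, if_neg h2]
      have hcollapse : (∑ v : G.V, if v ∈ S i then (if v = w k then dfun k else 0) else 0)
          = (if w k ∈ S i then dfun k else 0) := by
        simp_rw [hswap]
        rw [Finset.sum_ite_eq' Finset.univ (w k) (fun v => if v ∈ S i then dfun k else 0)]
        simp
      rw [hcollapse]
      by_cases hki : k ≤ i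
      · rw [if_pos ((hwmem k i hkr hi).2 hki), if_pos hki]
      · rw [if_neg (fun hm => hki ((hwmem k i hkr hi).1 hm)), if_neg hki]
    rw [Finset.sum_congr rfl hA]
    have hsubr : Finset.range (i+1) ⊆ Finset.range r := by
      intro x hx; simp only [Finset.mem_range] at hx ⊢; omega
    have hzero : ∀ x ∈ Finset.range r, x ∉ Finset.range (i+1) →
        (if x ≤ i then dfun x else 0) = 0 := by
      intro x _ hx
      rw [if_neg (by simp only [Finset.mem_range] at hx; omega)]
    rw [← Finset.sum_subset hsubr hzero]
    have : ∀ x ∈ Finset.range (i+1), (if x ≤ i then dfun x else 0) = dfun x := by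
      intro x hx
      rw [if_pos (by simp only [Finset.mem_range] at hx; omega)]
    rw [Finset.sum_congr rfl this, htel (i+1)]
    show (if i + 1 = 0 then (0 : Γ) else t (i+1-1)) = t i
    simp
  obtain ⟨f, hf0, hfβ⟩ := h β hβsum
  obtain ⟨k, hkk, htk⟩ := hcov (f e₀) (hf0 e₀)
  obtain ⟨hk1, hk2⟩ := hK'mem _ (hEspec k).1
  have hflow := Multigraph.cutSide_flow hG hk1 hk2 f β hfβ
  have hcs := hcsum k hkk
  rw [htk] at hcs
  have hcs' : (∑ v : G.V, if v ∈ G.cutSide e₀ (Efun k) then β v else 0) = f e₀ := hcs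
  rcases hflow with hfl | hfl
  · rw [hcs'] at hfl
    exact hf0 (Efun k) (add_eq_left.1 hfl.symm)
  · rw [hcs'] at hfl
    exact hf0 (Efun k) (sub_eq_self.1 hfl.symm)
end

section
/- If a graph G is ℤ₃-colorable, then G is 5-degenerate, i.e., every subgraph of G with at least one vertex contains a vertex of degree at most 5. Consequently, G is Γ-colorable for every finite abelian group Γ with |Γ| ≥ 6. -/
namespace Multigraph

/-- 5-degeneracy, as in the statement. -/
def Deg5 (H : Multigraph) : Prop :=
  ∀ (S : Set H.V) (T : Set H.E),
    (∀ e ∈ T, H.src e ∈ S ∧ H.tgt e ∈ S) → S.Nonempty →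
    ∃ v ∈ S, Nat.card {e : H.E // e ∈ T ∧ (H.src e = v ∨ H.tgt e = v)} ≤ 5

lemma key_three (d x : ZMod 3) (h1 : x ≠ d) (h2 : x ≠ d + 1) : x = d + 2 :=
  (by decide : ∀ d x : ZMod 3, x ≠ d → x ≠ d + 1 → x = d + 2) d x h1 h2

lemma colorable_deg5 (H : Multigraph) (h : H.GroupColorable (ZMod 3)) : H.Deg5 := by
  classical
  intro S T hST hS
  by_contra hcon
  push_neg at hcon
  set s := Fintype.card {v : H.V // v ∈ S} with hs_def
  set t := Fintype.card {e : H.E // e ∈ T} with ht_def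
  -- a surjection showing 3^t ≤ 3^s * 2^t
  have hsurj : Function.Surjective
      (fun p : ({v : H.V // v ∈ S} → ZMod 3) × ({e : H.E // e ∈ T} → Fin 2) =>
        (fun e : {e : H.E // e ∈ T} =>
          (p.1 ⟨H.tgt e.1, (hST e.1 e.2).2⟩ - p.1 ⟨H.src e.1, (hST e.1 e.2).1⟩) +
            (if p.2 e = 0 then 1 else 2) : {e : H.E // e ∈ T} → ZMod 3)) := by
    intro φT
    obtain ⟨c, hc⟩ := h (fun e => if he : e ∈ T then φT ⟨e, he⟩ else 0)
    refine ⟨⟨fun v => c v.1,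
      fun e => if φT e = (c (H.tgt e.1) - c (H.src e.1)) + 1 then 0 else 1⟩, ?_⟩
    funext e
    have hne : c (H.tgt e.1) - c (H.src e.1) ≠ φT e := by
      have := hc e.1
      rwa [dif_pos e.2] at this
    by_cases h1 : φT e = (c (H.tgt e.1) - c (H.src e.1)) + 1
    · simp [h1]
    · have h2 := key_three _ _ (Ne.symm hne) h1
      simp only [if_neg h1]
      simp [h2]
  have hcard : (3 : ℕ) ^ t ≤ 3 ^ s * 2 ^ t := by
    have := Fintype.card_le_of_surjective _ hsurj
    rw [Fintype.card_fun, Fintype.card_prod, Fintype.card_fun, Fintype.card_fun,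
      show Fintype.card (ZMod 3) = 3 from rfl, show Fintype.card (Fin 2) = 2 from rfl]
      at this
    exact this
  -- handshake: every vertex of S has degree ≥ 6 in T, so 6 * s ≤ 2 * t
  have hdouble : ∑ v : {v : H.V // v ∈ S},
      Nat.card {e : H.E // e ∈ T ∧ (H.src e = v.1 ∨ H.tgt e = v.1)} = 2 * t := by
    have hrw : ∀ v : {v : H.V // v ∈ S},
        Nat.card {e : H.E // e ∈ T ∧ (H.src e = v.1 ∨ H.tgt e = v.1)} =
          (Finset.univ.filter
            (fun e : H.E => e ∈ T ∧ (H.src e = v.1 ∨ H.tgt e = v.1))).card := by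
      intro v
      rw [Nat.card_eq_fintype_card, Fintype.card_subtype]
    calc ∑ v : {v : H.V // v ∈ S},
          Nat.card {e : H.E // e ∈ T ∧ (H.src e = v.1 ∨ H.tgt e = v.1)}
        = ∑ v : {v : H.V // v ∈ S}, ∑ e : H.E,
            if e ∈ T ∧ (H.src e = v.1 ∨ H.tgt e = v.1) then 1 else 0 := by
          refine Finset.sum_congr rfl fun v _ => ?_
          rw [hrw v, Finset.card_filter]
      _ = ∑ e : H.E, ∑ v : {v : H.V // v ∈ S},
            if e ∈ T ∧ (H.src e = v.1 ∨ H.tgt e = v.1) then 1 else 0 :=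
          Finset.sum_comm
      _ = ∑ e : H.E, if e ∈ T then 2 else 0 := by
          refine Finset.sum_congr rfl fun e _ => ?_
          by_cases he : e ∈ T
          · simp only [he, true_and, if_true]
            have : (Finset.univ.filter
                (fun v : {v : H.V // v ∈ S} => H.src e = v.1 ∨ H.tgt e = v.1)) =
                {⟨H.src e, (hST e he).1⟩, ⟨H.tgt e, (hST e he).2⟩} := by
              ext v
              simp only [Finset.mem_filter, Finset.mem_univ, true_and,
                Finset.mem_insert, Finset.mem_singleton]
              constructor
              · rintro (h | h) <;> [left; right] <;> exact Subtype.ext h.symm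
              · rintro (rfl | rfl) <;> [left; right] <;> rfl
            rw [← Finset.card_filter, this]
            rw [Finset.card_insert_of_notMem, Finset.card_singleton]
            simp only [Finset.mem_singleton]
            intro hcontra
            exact H.no_loop e (congrArg Subtype.val hcontra)
          · simp [he]
      _ = 2 * t := by
          rw [← Finset.sum_filter, Finset.sum_const, smul_eq_mul, mul_comm, ht_def,
            Fintype.card_subtype]
  have hlow : 6 * s ≤ 2 * t := by
    calc 6 * s = ∑ _v : {v : H.V // v ∈ S}, 6 := by
          rw [Finset.sum_const, Finset.card_univ, smul_eq_mul, mul_comm]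
      _ ≤ ∑ v : {v : H.V // v ∈ S},
            Nat.card {e : H.E // e ∈ T ∧ (H.src e = v.1 ∨ H.tgt e = v.1)} :=
          Finset.sum_le_sum fun v _ => hcon v.1 v.2
      _ = 2 * t := hdouble
  have hs1 : 1 ≤ s := Fintype.card_pos_iff.mpr ⟨⟨hS.choose, hS.choose_spec⟩⟩
  -- arithmetic contradiction
  obtain ⟨u, hu⟩ : ∃ u, t = u + 3 * s := ⟨t - 3 * s, by omega⟩
  have h3t : (3 : ℕ) ^ t = 3 ^ u * 27 ^ s := by
    rw [hu, pow_add, pow_mul]; norm_num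
  have h2t : (3 : ℕ) ^ s * 2 ^ t = 2 ^ u * 24 ^ s := by
    rw [hu, pow_add, pow_mul, show (24 : ℕ) ^ s = 3 ^ s * 8 ^ s from by
      rw [← Nat.mul_pow], show ((2 : ℕ) ^ 3) = 8 from rfl]
    ring
  rw [h3t, h2t] at hcard
  have h23 : (2 : ℕ) ^ u * 24 ^ s ≤ 3 ^ u * 24 ^ s :=
    Nat.mul_le_mul_right _ (Nat.pow_le_pow_left (by norm_num) u)
  have h2427 : (24 : ℕ) ^ s < 27 ^ s :=
    Nat.pow_lt_pow_left (by norm_num) (by omega)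
  have := le_trans hcard h23
  have h3u : 0 < (3 : ℕ) ^ u := Nat.pow_pos (by norm_num)
  have : (27 : ℕ) ^ s ≤ 24 ^ s := Nat.le_of_mul_le_mul_left (by linarith [this]) h3u
  omega

lemma deg5_deleteVertex (H : Multigraph) (hd : H.Deg5) (v : H.V) :
    (H.deleteVertex v).Deg5 := by
  classical
  intro S' T' hST' hS'
  obtain ⟨w, hw, hdeg⟩ := hd (Subtype.val '' S') (Subtype.val '' T')
    (by
      rintro e ⟨f, hf, rfl⟩
      obtain ⟨h1, h2⟩ := hST' f hf
      exact ⟨⟨(H.deleteVertex v).src f, h1, rfl⟩, ⟨(H.deleteVertex v).tgt f, h2, rfl⟩⟩)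
    (hS'.image _)
  obtain ⟨uu, huu, rfl⟩ := hw
  refine ⟨uu, huu, le_trans (Nat.card_le_card_of_injective
    (fun x : {e' : (H.deleteVertex v).E //
        e' ∈ T' ∧ ((H.deleteVertex v).src e' = uu ∨ (H.deleteVertex v).tgt e' = uu)} =>
      (⟨x.1.1, ⟨x.1, x.2.1, rfl⟩, by
        rcases x.2.2 with h | h
        · exact Or.inl (congrArg Subtype.val h)
        · exact Or.inr (congrArg Subtype.val h)⟩ :
        {e : H.E // e ∈ Subtype.val '' T' ∧ (H.src e = uu.1 ∨ H.tgt e = uu.1)}))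
    (fun a b hab => by
      apply Subtype.ext
      apply Subtype.ext
      have h2 := Subtype.ext_iff.mp hab
      exact h2)) hdeg⟩

lemma deg5_colorable : ∀ (n : ℕ) (H : Multigraph), Fintype.card H.V = n → H.Deg5 →
    ∀ (Γ : Type) [AddCommGroup Γ] [Fintype Γ], 6 ≤ Fintype.card Γ →
      H.GroupColorable Γ := by
  intro n
  induction n using Nat.strong_induction_on with
  | _ n ih =>
    intro H hn hd Γ _ _ hΓ φ
    classical
    by_cases hV : Nonempty H.V
    · obtain ⟨v, -, hv5⟩ := hd Set.univ Set.univ (fun e _ => ⟨trivial, trivial⟩)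
        ⟨hV.some, trivial⟩
      have hcard' : Fintype.card (H.deleteVertex v).V < n := by
        have h1 : Fintype.card {u : H.V // u ≠ v} < Fintype.card H.V :=
          Fintype.card_subtype_lt (x := v) (by simp)
        have h2 : Fintype.card (H.deleteVertex v).V = Fintype.card {u : H.V // u ≠ v} :=
          Fintype.card_congr (Equiv.refl _)
        omega
      have hd' := H.deg5_deleteVertex hd v
      obtain ⟨c', hc'⟩ := ih _ hcard' (H.deleteVertex v) rfl hd' Γ hΓ
        (fun e' => φ e'.1)
      have htne : ∀ e : H.E, H.src e = v → H.tgt e ≠ v :=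
        fun e hs ht => H.no_loop e (hs.trans ht.symm)
      have hsne : ∀ e : H.E, H.tgt e = v → H.src e ≠ v :=
        fun e ht hs => H.no_loop e (hs.trans ht.symm)
      set Inc := {e : H.E // e ∈ Set.univ ∧ (H.src e = v ∨ H.tgt e = v)} with hInc
      let forb : Inc → Γ := fun x =>
        if hs : H.src x.1 = v then c' ⟨H.tgt x.1, htne x.1 hs⟩ - φ x.1
        else φ x.1 + c' ⟨H.src x.1, hs⟩
      set F : Finset Γ := Finset.univ.image forb with hF
      have hF5 : F.card ≤ 5 := by
        refine le_trans Finset.card_image_le ?_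
        rw [Finset.card_univ]
        rwa [Nat.card_eq_fintype_card] at hv5
      obtain ⟨γ, hγ⟩ : ∃ γ : Γ, γ ∉ F := by
        by_contra hcc
        push_neg at hcc
        have h1 : (Finset.univ : Finset Γ).card ≤ F.card :=
          Finset.card_le_card fun x _ => hcc x
        rw [Finset.card_univ] at h1
        omega
      refine ⟨fun u => if h : u = v then γ else c' ⟨u, h⟩, ?_⟩
      intro e
      by_cases hs : H.src e = v
      · have ht : H.tgt e ≠ v := htne e hs
        simp only [dif_pos hs, dif_neg ht]
        intro heq
        apply hγ
        have hγeq : γ = c' ⟨H.tgt e, ht⟩ - φ e := by rw [← heq]; abel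
        have hmem : forb ⟨e, Set.mem_univ e, Or.inl hs⟩ ∈ F :=
          Finset.mem_image_of_mem _ (Finset.mem_univ _)
        have : forb ⟨e, Set.mem_univ e, Or.inl hs⟩ = c' ⟨H.tgt e, ht⟩ - φ e := by
          simp only [forb, dif_pos hs]
        rw [hγeq, ← this]
        exact hmem
      · by_cases ht : H.tgt e = v
        · simp only [dif_pos ht, dif_neg hs]
          intro heq
          apply hγ
          have hγeq : γ = φ e + c' ⟨H.src e, hs⟩ := by rw [← heq]; abel
          have hmem : forb ⟨e, Set.mem_univ e, Or.inr ht⟩ ∈ F :=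
            Finset.mem_image_of_mem _ (Finset.mem_univ _)
          have : forb ⟨e, Set.mem_univ e, Or.inr ht⟩ = φ e + c' ⟨H.src e, hs⟩ := by
            simp only [forb, dif_neg hs]
          rw [hγeq, ← this]
          exact hmem
        · simp only [dif_neg hs, dif_neg ht]
          exact hc' ⟨e, hs, ht⟩
    · exact ⟨fun u => absurd ⟨u⟩ hV, fun e => absurd ⟨H.src e⟩ hV⟩

end Multigraph

/-- If `G` is `ℤ₃`-colorable, then `G` is 5-degenerate (every subgraph
with at least one vertex has a vertex of degree at most 5); consequently `G` is
`Γ`-colorable for every finite abelian group `Γ` with `|Γ| ≥ 6`. -/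
theorem statement12 (G : Multigraph) (h : G.GroupColorable (ZMod 3)) :
    (∀ (S : Set G.V) (T : Set G.E),
        (∀ e ∈ T, G.src e ∈ S ∧ G.tgt e ∈ S) → S.Nonempty →
        ∃ v ∈ S, Nat.card {e : G.E // e ∈ T ∧ (G.src e = v ∨ G.tgt e = v)} ≤ 5) ∧
    (∀ (Γ : Type) [AddCommGroup Γ] [Fintype Γ],
        6 ≤ Fintype.card Γ → G.GroupColorable Γ) := by
  refine ⟨G.colorable_deg5 h, fun Γ _ _ hΓ =>
    Multigraph.deg5_colorable (Fintype.card G.V) G rfl (G.colorable_deg5 h) Γ hΓ⟩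
end

section
/- If a graph G with n vertices and m edges is ℤ₃-colorable, then 3ⁿ · 2ᵐ ≥ 3ᵐ; consequently m ≤ n · log(3)/log(3/2) < 2.8·n. -/
/-- If a graph `G` with `n` vertices and `m` edges is `ℤ₃`-colorable, then
`3ⁿ·2ᵐ ≥ 3ᵐ`; consequently `m ≤ n·log(3)/log(3/2)`, where `log(3)/log(3/2) < 2.8`. -/
theorem statement13 (G : Multigraph) (h : G.GroupColorable (ZMod 3)) :
    3 ^ Fintype.card G.V * 2 ^ Fintype.card G.E ≥ 3 ^ Fintype.card G.E ∧
    (Fintype.card G.E : ℝ) ≤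
      (Fintype.card G.V : ℝ) * (Real.log 3 / Real.log (3 / 2)) ∧
    Real.log 3 / Real.log (3 / 2) < 2.8 := by
  classical
  have hlogpos : 0 < Real.log (3 / 2) := Real.log_pos (by norm_num)
  -- counting bound
  have hcard : 3 ^ Fintype.card G.E ≤ 3 ^ Fintype.card G.V * 2 ^ Fintype.card G.E := by
    choose c hc using h
    set F : (G.E → ZMod 3) → (G.V → ZMod 3) × (G.E → {x : ZMod 3 // x ≠ 0}) :=
      fun φ => (c φ, fun e => ⟨φ e - (c φ (G.tgt e) - c φ (G.src e)), fun h0 => by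
        exact hc φ e (by
          have : φ e = c φ (G.tgt e) - c φ (G.src e) := by
            have := sub_eq_zero.mp h0
            exact this
          exact this.symm)⟩) with hFdef
    have hF : Function.Injective F := by
      intro φ ψ hφψ
      have h1 : c φ = c ψ := congrArg Prod.fst hφψ
      have h2 := congrArg Prod.snd hφψ
      funext e
      have h3 := congrArg Subtype.val (congrFun h2 e)
      simp only [hFdef] at h3
      rw [h1] at h3
      exact by linear_combination h3
    have hle := Fintype.card_le_of_injective F hF
    have e1 : Fintype.card (G.E → ZMod 3) = 3 ^ Fintype.card G.E := by
      simp [Fintype.card_fun]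
    have e2 : Fintype.card ((G.V → ZMod 3) × (G.E → {x : ZMod 3 // x ≠ 0}))
        = 3 ^ Fintype.card G.V * 2 ^ Fintype.card G.E := by
      have h2 : Fintype.card {x : ZMod 3 // x ≠ 0} = 2 := by decide
      rw [Fintype.card_prod, Fintype.card_fun, Fintype.card_fun, h2, ZMod.card]
    rw [e1, e2] at hle
    exact hle
  refine ⟨hcard, ?_, ?_⟩
  · -- take real logs
    set n : ℝ := (Fintype.card G.V : ℝ)
    set m : ℝ := (Fintype.card G.E : ℝ)
    have hn : 0 ≤ n := Nat.cast_nonneg _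
    have hm : 0 ≤ m := Nat.cast_nonneg _
    have hR : (3 : ℝ) ^ Fintype.card G.E ≤ 3 ^ Fintype.card G.V * 2 ^ Fintype.card G.E := by
      exact_mod_cast hcard
    have hlog := Real.log_le_log (by positivity) hR
    rw [Real.log_mul (by positivity) (by positivity), Real.log_pow, Real.log_pow,
      Real.log_pow] at hlog
    have hdiv : Real.log (3 / 2) = Real.log 3 - Real.log 2 := by
      rw [Real.log_div (by norm_num) (by norm_num)]
    have key : m * Real.log (3 / 2) ≤ n * Real.log 3 := by
      rw [hdiv]; ring_nf; ring_nf at hlog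
      nlinarith [hlog]
    rw [mul_div_assoc', le_div_iff₀ hlogpos]
    exact key
  · rw [div_lt_iff₀ hlogpos]
    have h35 : ((3:ℝ) ^ 5) < ((3/2 : ℝ)) ^ 14 := by norm_num
    have := Real.log_lt_log (by positivity) h35
    rw [Real.log_pow, Real.log_pow] at this
    push_cast at this
    nlinarith [this]
end

section
/- If a graph G is ℤ₃-colorable, then G is ℤ₅-colorable. -/
/-- Lift `ZMod 3` into `ZMod 5` via `{0,1,2}`. -/
def gLift : ZMod 3 → ZMod 5 := fun x => (x.val : ZMod 5)

/-- Fold `ZMod 5` back onto `ZMod 3`: `0 ↦ 0`, `1,3 ↦ 1`, `2,4 ↦ 2`. -/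
def hFold : ZMod 5 → ZMod 3 := fun x =>
  match x.val with
  | 0 => 0
  | 1 => 1
  | 2 => 2
  | 3 => 1
  | _ => 2

lemma hFold_gLift_sub : ∀ x y : ZMod 3, hFold (gLift x - gLift y) = x - y := by
  decide

/-- If a graph `G` is `ℤ₃`-colorable, then `G` is `ℤ₅`-colorable. -/
theorem statement14 (G : Multigraph) (h : G.GroupColorable (ZMod 3)) :
    G.GroupColorable (ZMod 5) := by
  intro φ
  obtain ⟨a, ha⟩ := h (fun e => hFold (φ e))
  refine ⟨fun v => gLift (a v), fun e heq => ha e ?_⟩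
  have := hFold_gLift_sub (a (G.tgt e)) (a (G.src e))
  rw [heq] at this
  exact this.symm
end

section
/- If a graph G is ℤ₃-colorable, then G is Γ-colorable for every finite abelian group Γ with |Γ| ≥ 5 (i.e., h(3) ≤ 5). -/
section Aux

open Finset

namespace Multigraph

/-- The section trick: if `Γ` contains `α, β` with `α+α ≠ 0`, `β+β ≠ 0`, `(α+β)+(α+β) ≠ 0`,
then any `ZMod 3`-colorable graph is `Γ`-colorable. -/
lemma groupColorable_of_pair (G : Multigraph) (h : G.GroupColorable (ZMod 3))
    {Γ : Type} [AddCommGroup Γ] (α β : Γ)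
    (h2a : α + α ≠ 0) (h2b : β + β ≠ 0) (h2ab : (α + β) + (α + β) ≠ 0) :
    G.GroupColorable Γ := by
  classical
  have f1 : α ≠ 0 := fun hh => h2a (by rw [hh, add_zero])
  have f2 : β ≠ 0 := fun hh => h2b (by rw [hh, add_zero])
  have f3 : α + β ≠ 0 := fun hh => h2ab (by rw [hh, add_zero])
  intro φ
  set s : ZMod 3 → Γ := fun x => if x = 0 then 0 else if x = 1 then α else α + β with hs
  have s0 : s 0 = 0 := by
    show (if (0 : ZMod 3) = 0 then (0 : Γ) else if (0 : ZMod 3) = 1 then α else α + β) = 0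
    rw [if_pos rfl]
  have s1 : s 1 = α := by
    show (if (1 : ZMod 3) = 0 then (0 : Γ) else if (1 : ZMod 3) = 1 then α else α + β) = α
    rw [if_neg (by decide), if_pos rfl]
  have s2 : s 2 = α + β := by
    show (if (2 : ZMod 3) = 0 then (0 : Γ) else if (2 : ZMod 3) = 1 then α else α + β) = α + β
    rw [if_neg (by decide), if_neg (by decide)]
  set ψ : G.E → ZMod 3 := fun e =>
    if φ e = α ∨ φ e = β ∨ φ e = -(α + β) then 1
    else if φ e = -α ∨ φ e = -β ∨ φ e = α + β then 2
    else 0 with hψ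
  obtain ⟨c₃, hc₃⟩ := h ψ
  refine ⟨fun v => s (c₃ v), fun e => ?_⟩
  have hne : c₃ (G.tgt e) - c₃ (G.src e) ≠ ψ e := hc₃ e
  set x := c₃ (G.src e) with hx
  set y := c₃ (G.tgt e) with hy
  set t := φ e with ht
  have tri : ∀ z : ZMod 3, z = 0 ∨ z = 1 ∨ z = 2 := by decide
  have case0 : ψ e ≠ 0 → (0 : Γ) ≠ t := by
    intro hψ0
    have hor : (t = α ∨ t = β ∨ t = -(α + β)) ∨ (t = -α ∨ t = -β ∨ t = α + β) := by
      by_contra hcon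
      have hA : ¬(t = α ∨ t = β ∨ t = -(α + β)) := fun a => hcon (Or.inl a)
      have hB : ¬(t = -α ∨ t = -β ∨ t = α + β) := fun b => hcon (Or.inr b)
      apply hψ0
      simp only [hψ, ← ht]
      rw [if_neg hA, if_neg hB]
    rcases hor with (h' | h' | h') | (h' | h' | h') <;> rw [h']
    · exact fun hh => f1 hh.symm
    · exact fun hh => f2 hh.symm
    · exact fun hh => f3 (neg_eq_zero.mp hh.symm)
    · exact fun hh => f1 (neg_eq_zero.mp hh.symm)
    · exact fun hh => f2 (neg_eq_zero.mp hh.symm)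
    · exact fun hh => f3 hh.symm
  have case1 : ψ e ≠ 1 → ∀ w : Γ, (w = α ∨ w = β ∨ w = -(α + β)) → w ≠ t := by
    intro hψ1 w hw
    have hcon : ¬(t = α ∨ t = β ∨ t = -(α + β)) := by
      intro hcc
      apply hψ1
      simp only [hψ, ← ht]
      rw [if_pos hcc]
    rcases hw with h' | h' | h' <;> rw [h'] <;>
      exact fun hh => hcon (by rw [← hh]; tauto)
  have case2 : ψ e ≠ 2 → ∀ w : Γ, (w = -α ∨ w = -β ∨ w = α + β) → w ≠ t := by
    intro hψ2 w hw
    by_cases hc1 : t = α ∨ t = β ∨ t = -(α + β)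
    · rcases hw with h' | h' | h' <;> rcases hc1 with h'' | h'' | h'' <;> rw [h', h'']
      · exact fun hh => h2a (neg_eq_iff_add_eq_zero.mp hh)
      · exact fun hh => f3 (neg_eq_iff_add_eq_zero.mp hh)
      · exact fun hh => f2 (left_eq_add.mp (neg_inj.mp hh))
      · exact fun hh => f3 (by rw [add_comm]; exact neg_eq_iff_add_eq_zero.mp hh)
      · exact fun hh => h2b (neg_eq_iff_add_eq_zero.mp hh)
      · exact fun hh => f1 (right_eq_add.mp (neg_inj.mp hh))
      · exact fun hh => f2 (add_eq_left.mp hh)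
      · exact fun hh => f1 (add_eq_right.mp hh)
      · exact fun hh => h2ab (eq_neg_iff_add_eq_zero.mp hh)
    · have hcon : ¬(t = -α ∨ t = -β ∨ t = α + β) := by
        intro hcc
        apply hψ2
        simp only [hψ, ← ht]
        rw [if_neg hc1, if_pos hcc]
      rcases hw with h' | h' | h' <;> rw [h'] <;>
        exact fun hh => hcon (by rw [← hh]; tauto)
  show s y - s x ≠ t
  rcases tri x with hx' | hx' | hx' <;> rcases tri y with hy' | hy' | hy'
  · have hd : y - x = (0 : ZMod 3) := by rw [hx', hy']; decide
    rw [hx', hy', sub_self]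
    exact case0 fun hh => hne (hd.trans hh.symm)
  · have hd : y - x = (1 : ZMod 3) := by rw [hx', hy']; decide
    rw [hx', hy', s1, s0, sub_zero]
    exact case1 (fun hh => hne (hd.trans hh.symm)) α (Or.inl rfl)
  · have hd : y - x = (2 : ZMod 3) := by rw [hx', hy']; decide
    rw [hx', hy', s0, sub_zero]
    exact case2 (fun hh => hne (hd.trans hh.symm)) (α + β) (Or.inr (Or.inr rfl))
  · have hd : y - x = (2 : ZMod 3) := by rw [hx', hy']; decide
    rw [hx', hy', s0, s1, zero_sub]
    exact case2 (fun hh => hne (hd.trans hh.symm)) (-α) (Or.inl rfl)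
  · have hd : y - x = (0 : ZMod 3) := by rw [hx', hy']; decide
    rw [hx', hy', sub_self]
    exact case0 fun hh => hne (hd.trans hh.symm)
  · have hd : y - x = (1 : ZMod 3) := by rw [hx', hy']; decide
    have hval : s 2 - s 1 = β := by rw [s2, s1]; abel
    rw [hx', hy', hval]
    exact case1 (fun hh => hne (hd.trans hh.symm)) β (Or.inr (Or.inl rfl))
  · have hd : y - x = (1 : ZMod 3) := by rw [hx', hy']; decide
    rw [hx', hy', s0, s2, zero_sub]
    exact case1 (fun hh => hne (hd.trans hh.symm)) (-(α + β)) (Or.inr (Or.inr rfl))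
  · have hd : y - x = (2 : ZMod 3) := by rw [hx', hy']; decide
    have hval : s 1 - s 2 = -β := by rw [s1, s2]; abel
    rw [hx', hy', hval]
    exact case2 (fun hh => hne (hd.trans hh.symm)) (-β) (Or.inr (Or.inl rfl))
  · have hd : y - x = (0 : ZMod 3) := by rw [hx', hy']; decide
    rw [hx', hy', sub_self]
    exact case0 fun hh => hne (hd.trans hh.symm)

/-- Deleting a vertex preserves group colorability. -/
lemma deleteVertex_groupColorable (G : Multigraph) {Γ : Type} [AddCommGroup Γ]
    (h : G.GroupColorable Γ) (v : G.V) : (G.deleteVertex v).GroupColorable Γ := by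
  classical
  intro φ'
  obtain ⟨c, hc⟩ := h (fun e => if he : G.src e ≠ v ∧ G.tgt e ≠ v then φ' ⟨e, he⟩ else 0)
  refine ⟨fun u => c u.1, fun e' => ?_⟩
  have := hc e'.1
  rwa [dif_pos e'.2] at this

/-- The counting bound: a `ZMod 3`-colorable graph satisfies `3^m ≤ 3^n · 2^m`. -/
lemma card_pow_le (G : Multigraph) (h : G.GroupColorable (ZMod 3)) :
    3 ^ Fintype.card G.E ≤ 3 ^ Fintype.card G.V * 2 ^ Fintype.card G.E := by
  classical
  have tri2 : ∀ z w : ZMod 3, w ≠ z → z = w + 1 ∨ z = w + 2 := by decide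
  set F : (G.E → ZMod 3) → (G.V → ZMod 3) × (G.E → Bool) :=
    fun φ => ((h φ).choose,
      fun e => decide (φ e = (h φ).choose (G.tgt e) - (h φ).choose (G.src e) + 1)) with hF
  have hinj : Function.Injective F := by
    intro φ₁ φ₂ hEq
    have h1 : (h φ₁).choose = (h φ₂).choose := congrArg Prod.fst hEq
    have hbits := congrArg Prod.snd hEq
    funext e
    set c := (h φ₁).choose with hc
    set d := c (G.tgt e) - c (G.src e) with hd
    have hb : decide (φ₁ e = d + 1) = decide (φ₂ e = d + 1) := by
      have := congrFun hbits e
      simp only [hF] at this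
      rw [← h1] at this
      exact this
    have hne1 : d ≠ φ₁ e := (h φ₁).choose_spec e
    have hne2 : d ≠ φ₂ e := by
      have := (h φ₂).choose_spec e
      rw [← h1] at this
      exact this
    have hdd : d + 2 ≠ d + 1 := fun hh => (by decide : (2 : ZMod 3) ≠ 1) (add_left_cancel hh)
    rcases tri2 (φ₁ e) d hne1 with hx | hx <;> rcases tri2 (φ₂ e) d hne2 with hy | hy
    · rw [hx, hy]
    · rw [hx, hy] at hb
      rw [decide_eq_decide] at hb
      exact absurd (hb.mp rfl) hdd
    · rw [hx, hy] at hb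
      rw [decide_eq_decide] at hb
      exact absurd (hb.mpr rfl) hdd
    · rw [hx, hy]
  have hcard := Fintype.card_le_of_injective F hinj
  rwa [Fintype.card_fun, Fintype.card_prod, Fintype.card_fun, Fintype.card_fun,
    ZMod.card, Fintype.card_bool] at hcard

/-- Every nonempty `ZMod 3`-colorable graph has a vertex of degree at most `5`. -/
lemma exists_degree_le (G : Multigraph) (h : G.GroupColorable (ZMod 3))
    (hV : Nonempty G.V) : ∃ v : G.V, G.degree v ≤ 5 := by
  classical
  by_contra hcon
  push_neg at hcon
  have hdeg : ∀ v, G.degree v =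
      ((univ : Finset G.E).filter fun e => G.src e = v).card +
      ((univ : Finset G.E).filter fun e => G.tgt e = v).card := by
    intro v
    rw [degree, Nat.card_eq_fintype_card, Fintype.card_subtype, Finset.filter_or,
      Finset.card_union_of_disjoint]
    rw [Finset.disjoint_left]
    intro e he1 he2
    exact G.no_loop e (by rw [(Finset.mem_filter.mp he1).2, (Finset.mem_filter.mp he2).2])
  have hsum1 : ∑ v : G.V, ((univ : Finset G.E).filter fun e => G.src e = v).card
      = Fintype.card G.E := by
    rw [← Finset.card_univ,
      Finset.card_eq_sum_card_fiberwise (fun e _ => Finset.mem_univ (G.src e))]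
  have hsum2 : ∑ v : G.V, ((univ : Finset G.E).filter fun e => G.tgt e = v).card
      = Fintype.card G.E := by
    rw [← Finset.card_univ,
      Finset.card_eq_sum_card_fiberwise (fun e _ => Finset.mem_univ (G.tgt e))]
  have h6 : 6 * Fintype.card G.V ≤ 2 * Fintype.card G.E := by
    calc 6 * Fintype.card G.V = ∑ _v : G.V, 6 := by
          rw [Finset.sum_const, Finset.card_univ, smul_eq_mul, mul_comm]
      _ ≤ ∑ v : G.V, G.degree v := Finset.sum_le_sum (fun v _ => hcon v)
      _ = 2 * Fintype.card G.E := by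
          simp only [hdeg]
          rw [Finset.sum_add_distrib, hsum1, hsum2]
          ring
  set n := Fintype.card G.V with hn
  set m := Fintype.card G.E with hm
  have h3 : 3 * n ≤ m := by omega
  have hnm : n ≤ m := by omega
  have hcard := card_pow_le G h
  have hmn : 3 ^ (m - n) ≤ 2 ^ m := by
    have hstep : (3 : ℕ) ^ n * 3 ^ (m - n) ≤ 3 ^ n * 2 ^ m := by
      rw [← pow_add, Nat.add_sub_cancel' hnm]
      exact hcard
    exact Nat.le_of_mul_le_mul_left hstep (Nat.pow_pos (by norm_num))
  have h9 : 9 ^ m ≤ 8 ^ m := by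
    calc 9 ^ m = 3 ^ (2 * m) := by rw [pow_mul]; norm_num
      _ ≤ 3 ^ (3 * (m - n)) := Nat.pow_le_pow_right (by norm_num) (by omega)
      _ = (3 ^ (m - n)) ^ 3 := by rw [← pow_mul, mul_comm]
      _ ≤ (2 ^ m) ^ 3 := Nat.pow_le_pow_left hmn 3
      _ = 8 ^ m := by rw [← pow_mul, mul_comm m 3, pow_mul]; norm_num
  have hm0 : m = 0 := by
    by_contra hmz
    exact absurd h9 (not_le.mpr (Nat.pow_lt_pow_left (by norm_num) hmz))
  have hn1 : 1 ≤ n := Fintype.card_pos_iff.mpr hV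
  omega

/-- Greedy colorability for groups of order at least 6, by induction on the number
of vertices, deleting a vertex of degree at most 5. -/
lemma groupColorable_of_six (Γ : Type) [AddCommGroup Γ] [Fintype Γ]
    (hΓ : 6 ≤ Fintype.card Γ) :
    ∀ (N : ℕ) (G : Multigraph), Fintype.card G.V ≤ N →
      G.GroupColorable (ZMod 3) → G.GroupColorable Γ := by
  intro N
  induction N with
  | zero =>
    intro G hG h φ
    have hemp : IsEmpty G.V := Fintype.card_eq_zero_iff.mp (Nat.le_zero.mp hG)
    exact ⟨fun u => (hemp.false u).elim, fun e => (hemp.false (G.src e)).elim⟩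
  | succ N IH =>
    intro G hG h
    by_cases hle : Fintype.card G.V ≤ N
    · exact IH G hle h
    · have hNonempty : Nonempty G.V := by
        rw [← Fintype.card_pos_iff]
        omega
      obtain ⟨v, hv⟩ := exists_degree_le G h hNonempty
      classical
      set G' := G.deleteVertex v with hG'
      have hcard' : Fintype.card G'.V ≤ N := by
        have hcompl : Fintype.card G'.V = Fintype.card G.V - 1 := by
          have h1 : Fintype.card {u : G.V // ¬ u = v} = Fintype.card G.V
              - Fintype.card {u : G.V // u = v} := Fintype.card_subtype_compl _
          rw [Fintype.card_subtype_eq] at h1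
          exact h1
        omega
      have hcolor' := IH G' hcard' (G.deleteVertex_groupColorable h v)
      intro φ
      obtain ⟨c', hc'⟩ := hcolor' (fun e' => φ e'.1)
      set g : G.E → Γ := fun e =>
        if ht' : G.tgt e = v then
          (if hs' : G.src e = v then 0 else φ e + c' ⟨G.src e, hs'⟩)
        else c' ⟨G.tgt e, ht'⟩ - φ e with hg
      set S : Finset Γ :=
        ((univ : Finset G.E).filter fun e => G.src e = v ∨ G.tgt e = v).image g with hS
      have hScard : S.card < Fintype.card Γ := by
        have h1 : S.card ≤ G.degree v := by
          rw [hS, degree, Nat.card_eq_fintype_card, Fintype.card_subtype]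
          exact Finset.card_image_le
        omega
      have hex : ∃ a : Γ, a ∉ S := by
        by_contra hcc
        push_neg at hcc
        have hsub : (univ : Finset Γ) ⊆ S := fun a _ => hcc a
        have := Finset.card_le_card hsub
        rw [Finset.card_univ] at this
        omega
      obtain ⟨a, ha⟩ := hex
      refine ⟨fun u => if hu : u = v then a else c' ⟨u, hu⟩, fun e => ?_⟩
      by_cases hs : G.src e = v
      · have ht : G.tgt e ≠ v := fun hh => G.no_loop e (hs.trans hh.symm)
        simp only
        rw [dif_pos hs, dif_neg ht]
        intro hEq
        apply ha
        rw [hS]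
        refine Finset.mem_image.mpr ⟨e, Finset.mem_filter.mpr ⟨Finset.mem_univ e, Or.inl hs⟩, ?_⟩
        simp only [hg]
        rw [dif_neg ht, ← hEq]
        abel
      · by_cases ht : G.tgt e = v
        · simp only
          rw [dif_pos ht, dif_neg hs]
          intro hEq
          apply ha
          rw [hS]
          refine Finset.mem_image.mpr
            ⟨e, Finset.mem_filter.mpr ⟨Finset.mem_univ e, Or.inr ht⟩, ?_⟩
          simp only [hg]
          rw [dif_pos ht, dif_neg hs, ← hEq]
          abel
        · simp only
          rw [dif_neg hs, dif_neg ht]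
          exact hc' ⟨e, hs, ht⟩

end Multigraph

end Aux

/-- If a graph `G` is `ℤ₃`-colorable, then `G` is `Γ`-colorable for every
finite abelian group `Γ` with `|Γ| ≥ 5` (i.e. `h(3) ≤ 5`). -/
theorem statement15 (G : Multigraph) (h : G.GroupColorable (ZMod 3))
    (Γ : Type) [AddCommGroup Γ] [Fintype Γ] (hΓ : 5 ≤ Fintype.card Γ) :
    G.GroupColorable Γ := by
  classical
  by_cases hex : ∃ α β : Γ, α + α ≠ 0 ∧ β + β ≠ 0 ∧ (α + β) + (α + β) ≠ 0
  · obtain ⟨α, β, h1, h2, h3⟩ := hex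
    exact G.groupColorable_of_pair h α β h1 h2 h3
  · have h6 : 6 ≤ Fintype.card Γ := by
      rcases Nat.lt_or_ge (Fintype.card Γ) 6 with hlt | hge
      · exfalso
        have h5 : Fintype.card Γ = 5 := by omega
        have hdvd : (5 : ℕ) ∣ Fintype.card Γ := by rw [h5]
        haveI : Fact (Nat.Prime 5) := ⟨by norm_num⟩
        obtain ⟨g, hg⟩ := exists_prime_addOrderOf_dvd_card 5 hdvd
        have h2g : g + g ≠ 0 := by
          intro hh
          have h2 : (2 : ℕ) • g = 0 := by rw [two_nsmul]; exact hh
          have hdd : (5 : ℕ) ∣ 2 := by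
            rw [← hg]
            exact addOrderOf_dvd_of_nsmul_eq_zero h2
          norm_num at hdd
        have h4g : (g + g) + (g + g) ≠ 0 := by
          intro hh
          have h4 : (4 : ℕ) • g = 0 := by
            rw [show (4 : ℕ) = 2 + 2 from rfl, add_nsmul, two_nsmul]
            exact hh
          have hdd : (5 : ℕ) ∣ 4 := by
            rw [← hg]
            exact addOrderOf_dvd_of_nsmul_eq_zero h4
          norm_num at hdd
        exact hex ⟨g, g, h2g, h2g, h4g⟩
      · exact hge
    exact Multigraph.groupColorable_of_six Γ h6 (Fintype.card G.V) G le_rfl h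
end

section
/- If a graph G is ℤ₃-connected, then G has an orientation in which every vertex, except possibly one, has outdegree at least 2; consequently, every graph obtained from G by identifying vertices (and removing resulting loops) on a vertex set of size r has at least 2r − 2 edges. -/
section Aux

open Finset

lemma natCard_filter {α : Type} [Fintype α] (p : α → Prop) [DecidablePred p] :
    Nat.card {x // p x} = ∑ x : α, if p x then 1 else 0 := by
  rw [Nat.card_eq_fintype_card, Fintype.card_subtype, Finset.card_filter]

lemma zmod3_cases : ∀ x : ZMod 3, x ≠ 0 → x = 1 ∨ x = 2 := by decide

namespace Multigraph

lemma outDeg_eq_sum (G : Multigraph) (σ : G.E → Bool) (v : G.V) :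
    G.outDeg σ v =
      ∑ e : G.E, if (σ e = true ∧ G.src e = v) ∨ (σ e = false ∧ G.tgt e = v) then 1 else 0 := by
  classical
  rw [outDeg, natCard_filter]

lemma degree_eq_sum (G : Multigraph) (v : G.V) :
    G.degree v = ∑ e : G.E, if G.src e = v ∨ G.tgt e = v then 1 else 0 := by
  classical
  rw [degree, natCard_filter]

lemma sum_outDeg (G : Multigraph) (σ : G.E → Bool) :
    ∑ v : G.V, G.outDeg σ v = Nat.card G.E := by
  classical
  simp only [outDeg_eq_sum]
  rw [Finset.sum_comm, Nat.card_eq_fintype_card, ← Finset.card_univ, Finset.card_eq_sum_ones]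
  refine Finset.sum_congr rfl fun e _ => ?_
  cases hσ : σ e <;> simp [hσ, Finset.sum_ite_eq]

/-- The key lemma: if `G` is `ℤ₃`-connected then, for any chosen vertex `x₀`, there
is an orientation in which every vertex other than `x₀` has out-degree at least 2. -/
lemma exists_orientation (G : Multigraph) (h : G.GroupConnected (ZMod 3)) (x₀ : G.V) :
    ∃ σ : G.E → Bool, ∀ v : G.V, v ≠ x₀ → 2 ≤ G.outDeg σ v := by
  classical
  set S : ZMod 3 := ∑ u : G.V, (1 - (G.degree u : ZMod 3)) with hS
  set β : G.V → ZMod 3 := fun v =>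
    (if v = x₀ then -S else 0) + (1 - (G.degree v : ZMod 3)) with hβdef
  have hβ : ∑ v : G.V, β v = 0 := by
    rw [hβdef, Finset.sum_add_distrib, Finset.sum_ite_eq' Finset.univ x₀ (fun _ => -S)]
    simp [hS]
  obtain ⟨f, hf, hflow⟩ := h β hβ
  refine ⟨fun e => decide (f e = 1), fun v hv => ?_⟩
  set σ : G.E → Bool := fun e => decide (f e = 1) with hσdef
  -- the three indicator sums
  set O : ZMod 3 := ∑ e : G.E,
    if (σ e = true ∧ G.src e = v) ∨ (σ e = false ∧ G.tgt e = v) then 1 else 0 with hO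
  set I : ZMod 3 := ∑ e : G.E,
    if (σ e = true ∧ G.tgt e = v) ∨ (σ e = false ∧ G.src e = v) then 1 else 0 with hI
  have hOcast : ((G.outDeg σ v : ZMod 3)) = O := by
    rw [outDeg_eq_sum, hO]; push_cast; rfl
  have h1 : O - I = β v := by
    rw [← hflow v, netFlow, hO, hI, ← Finset.sum_sub_distrib, ← Finset.sum_sub_distrib]
    refine Finset.sum_congr rfl fun e _ => ?_
    rcases zmod3_cases (f e) (hf e) with hfe | hfe
    · have hσe : σ e = true := by simp [hσdef, hfe]
      by_cases hs : G.src e = v <;> by_cases ht : G.tgt e = v <;>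
        simp [hσe, hs, ht, hfe]
    · have hne1 : ¬ (f e = 1) := by rw [hfe]; decide
      have hσe : σ e = false := by simp [hσdef, hne1]
      by_cases hs : G.src e = v <;> by_cases ht : G.tgt e = v <;>
          simp [hσe, hs, ht, hfe] <;>
        first
          | decide
          | exact absurd (hs.trans ht.symm) (G.no_loop e)
  have h2 : O + I = (G.degree v : ZMod 3) := by
    rw [degree_eq_sum, hO, hI]
    push_cast
    rw [← Finset.sum_add_distrib]
    refine Finset.sum_congr rfl fun e _ => ?_
    have hloop := G.no_loop e
    cases hσe : σ e <;>
      by_cases hs : G.src e = v <;> by_cases ht : G.tgt e = v <;>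
        first
          | exact absurd (hs.trans ht.symm) hloop
          | simp [hσe, hs, ht]
  have hβv : β v = 1 - (G.degree v : ZMod 3) := by simp [hβdef, hv]
  have h2O : 2 * O = 1 := by
    have : O - I + (O + I) = β v + (G.degree v : ZMod 3) := by rw [h1, h2]
    rw [hβv] at this
    linear_combination this
  have hO2 : ((G.outDeg σ v : ZMod 3)) = 2 := by
    rw [hOcast]
    have h4 : (2 : ZMod 3) * (2 * O) = O := by
      rw [← mul_assoc]
      have : (2 : ZMod 3) * 2 = 1 := by decide
      rw [this, one_mul]
    rw [← h4, h2O]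
    decide
  by_contra hlt
  push_neg at hlt
  interval_cases hn : (G.outDeg σ v) <;> revert hO2 <;> decide

/-- The graph obtained from `G` by identifying vertices according to `π` and deleting
the resulting loops. -/
@[reducible]
def contract (G : Multigraph) {W : Type} [Fintype W] [DecidableEq W] (π : G.V → W)
    [DecidablePred fun e : G.E => π (G.src e) ≠ π (G.tgt e)] : Multigraph where
  V := W
  E := {e : G.E // π (G.src e) ≠ π (G.tgt e)}
  vFintype := inferInstance
  eFintype := inferInstance
  vDecEq := inferInstance
  eDecEq := inferInstance
  src := fun e => π (G.src e.1)
  tgt := fun e => π (G.tgt e.1)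
  no_loop := fun e => e.2

/-- `ℤ₃`-connectivity is preserved by identification of vertices. -/
lemma contract_groupConnected (G : Multigraph) {W : Type} [Fintype W] [DecidableEq W]
    (π : G.V → W) [DecidablePred fun e : G.E => π (G.src e) ≠ π (G.tgt e)]
    (hπ : Function.Surjective π) (h : G.GroupConnected (ZMod 3)) :
    (G.contract π).GroupConnected (ZMod 3) := by
  classical
  intro β hβ
  set s : W → G.V := Function.surjInv hπ with hsdef
  have hs : ∀ w, π (s w) = w := fun w => Function.surjInv_eq hπ w
  set β' : G.V → ZMod 3 := fun v => ∑ w : W, if s w = v then β w else 0 with hβ'def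
  have hsum : ∑ v : G.V, β' v = 0 := by
    rw [hβ'def, Finset.sum_comm]
    simpa [Finset.sum_ite_eq] using hβ
  obtain ⟨f, hf, hflow⟩ := h β' hsum
  refine ⟨fun e => f e.1, fun e => hf e.1, fun w => ?_⟩
  have key : ∑ v : G.V, (if π v = w then G.netFlow f v else 0) =
      (G.contract π).netFlow (fun e => f e.1) w := by
    show (∑ v : G.V, if π v = w then G.netFlow f v else 0) =
      (∑ e : {e : G.E // π (G.src e) ≠ π (G.tgt e)}, if π (G.src e.1) = w then f e.1 else 0) -
      (∑ e : {e : G.E // π (G.src e) ≠ π (G.tgt e)}, if π (G.tgt e.1) = w then f e.1 else 0)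
    have hside : ∀ g : G.E → G.V,
        (∑ v : G.V, ∑ e : G.E, if π v = w then (if g e = v then f e else 0) else 0) =
          ∑ e : G.E, if π (g e) = w then f e else 0 := by
      intro g
      rw [Finset.sum_comm]
      refine Finset.sum_congr rfl fun e _ => ?_
      rw [Finset.sum_congr rfl
        (fun v _ => show (if π v = w then (if g e = v then f e else 0) else 0)
            = if g e = v then (if π v = w then f e else 0) else 0 by
          by_cases h1 : π v = w <;> by_cases h2 : g e = v <;> simp [h1, h2]),
        Finset.sum_ite_eq Finset.univ (g e) (fun v => if π v = w then f e else 0)]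
      simp
    have hsub : ∀ g : G.E → G.V,
        (∑ e : {e : G.E // π (G.src e) ≠ π (G.tgt e)}, if π (g e.1) = w then f e.1 else 0) =
          ∑ e ∈ Finset.univ.filter (fun e : G.E => π (G.src e) ≠ π (G.tgt e)),
            if π (g e) = w then f e else 0 := by
      intro g
      exact (Finset.sum_subtype
        (Finset.univ.filter fun e : G.E => π (G.src e) ≠ π (G.tgt e))
        (fun x => by simp) (fun e => if π (g e) = w then f e else 0)).symm
    rw [Finset.sum_congr rfl (fun v _ =>
        show (if π v = w then G.netFlow f v else 0) =
            (∑ e : G.E, if π v = w then (if G.src e = v then f e else 0) else 0) -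
            (∑ e : G.E, if π v = w then (if G.tgt e = v then f e else 0) else 0) by
          by_cases h1 : π v = w <;> simp [h1, netFlow]),
      Finset.sum_sub_distrib, hside G.src, hside G.tgt,
      hsub G.src, hsub G.tgt,
      Finset.sum_filter, Finset.sum_filter, ← Finset.sum_sub_distrib, ← Finset.sum_sub_distrib]
    refine Finset.sum_congr rfl fun e _ => ?_
    by_cases hl : π (G.src e) ≠ π (G.tgt e)
    · simp [hl]
    · push_neg at hl
      simp [hl]
  rw [← key]
  have : ∀ v : G.V, (if π v = w then G.netFlow f v else 0) =
      ∑ w' : W, if s w' = v ∧ π v = w then β w' else 0 := by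
    intro v
    by_cases h1 : π v = w <;> simp [h1, hflow v, hβ'def]
  rw [Finset.sum_congr rfl fun v _ => this v, Finset.sum_comm]
  have : ∀ w' : W, (∑ v : G.V, if s w' = v ∧ π v = w then β w' else 0) =
      if w' = w then β w' else 0 := by
    intro w'
    rw [Finset.sum_congr rfl (fun v _ =>
      show (if s w' = v ∧ π v = w then β w' else 0)
          = if s w' = v then (if π v = w then β w' else 0) else 0 by
        by_cases h1 : s w' = v <;> simp [h1]),
      Finset.sum_ite_eq Finset.univ (s w') (fun v => if π v = w then β w' else 0)]
    simp [hs w']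
  rw [Finset.sum_congr rfl fun w' _ => this w']
  simp

end Multigraph

end Aux

/-- If `G` is `ℤ₃`-connected, then `G` has an orientation (described by
`σ : E → Bool`, telling for each edge whether it keeps its reference direction) in which
all vertices except possibly one have out-degree at least 2; consequently every graph
obtained from `G` by identifying vertices (via a surjection `π` onto a vertex set `W` of
size `r`, deleting the arising loops) has at least `2r - 2` edges. -/
theorem statement16 (G : Multigraph) (h : G.GroupConnected (ZMod 3)) :
    (∃ σ : G.E → Bool, ∀ x y : G.V, x ≠ y →
        2 ≤ G.outDeg σ x ∨ 2 ≤ G.outDeg σ y) ∧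
    (∀ (W : Type) [Fintype W] (π : G.V → W), Function.Surjective π →
        2 * Fintype.card W - 2 ≤
          Nat.card {e : G.E // π (G.src e) ≠ π (G.tgt e)}) := by
  constructor
  · by_cases hV : Nonempty G.V
    · obtain ⟨x₀⟩ := hV
      obtain ⟨σ, hσ⟩ := G.exists_orientation h x₀
      refine ⟨σ, fun x y hxy => ?_⟩
      rcases eq_or_ne x x₀ with rfl | hx
      · exact Or.inr (hσ y fun hy => hxy hy.symm)
      · exact Or.inl (hσ x hx)
    · exact ⟨fun _ => true, fun x _ _ => absurd ⟨x⟩ hV⟩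
  · intro W _ π hπ
    classical
    have hH := G.contract_groupConnected π hπ h
    rcases isEmpty_or_nonempty W with hW | hW
    · simp [Fintype.card_eq_zero]
    · obtain ⟨x₀⟩ := hW
      obtain ⟨σ, hσ⟩ := (G.contract π).exists_orientation hH x₀
      have hsum := (G.contract π).sum_outDeg σ
      have hcard : Nat.card {e : G.E // π (G.src e) ≠ π (G.tgt e)} =
          Nat.card (G.contract π).E := rfl
      have hcardW : Fintype.card W = Fintype.card (G.contract π).V := rfl
      rw [hcard, ← hsum, hcardW]
      have h1 : ∑ _w ∈ Finset.univ.erase (x₀ : (G.contract π).V), 2 =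
          (Fintype.card (G.contract π).V - 1) * 2 := by
        rw [Finset.sum_const, Finset.card_erase_of_mem (Finset.mem_univ _), Finset.card_univ,
          smul_eq_mul, ← hcardW]
      have h2 : (∑ w ∈ Finset.univ.erase (x₀ : (G.contract π).V), 2) ≤
          ∑ w ∈ Finset.univ.erase (x₀ : (G.contract π).V), (G.contract π).outDeg σ w :=
        Finset.sum_le_sum fun w hw => hσ w (Finset.mem_erase.mp hw).1
      have h3 : (∑ w ∈ Finset.univ.erase (x₀ : (G.contract π).V),
            (G.contract π).outDeg σ w) ≤ ∑ w : (G.contract π).V, (G.contract π).outDeg σ w :=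
        Finset.sum_le_sum_of_subset (Finset.erase_subset _ _)
      have hne : Nonempty (G.contract π).V := ⟨x₀⟩
      have hpos : 1 ≤ Fintype.card (G.contract π).V := Fintype.card_pos
      omega
end

section
/- For every ε > 0 there exist infinitely many primes p with the following property: there exists a graph G and a finite abelian group Γ' with |Γ'| ≥ (2 − ε)·p such that G is ℤ_p-colorable but G is not Γ'-colorable. -/
section Statement18Aux

open Finset Pointwise

/-- The cycle multigraph on `ZMod k` with `m` parallel edges between consecutive vertices. -/
def cycGraph (k m : ℕ) [NeZero k] (hk : 1 < k) : Multigraph where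
  V := ZMod k
  E := ZMod k × Fin m
  vFintype := inferInstance
  eFintype := inferInstance
  vDecEq := inferInstance
  eDecEq := inferInstance
  src := fun e => e.1
  tgt := fun e => e.1 + 1
  no_loop := by
    intro e h
    have h2 : (0 : ZMod k) = 1 := by
      have h1 : e.1 + 0 = e.1 + 1 := by rw [add_zero]; exact h
      exact add_left_cancel h1
    have h3 : ((1 : ℕ) : ZMod k).val = (0 : ZMod k).val := by
      rw [Nat.cast_one, ← h2]
    rw [ZMod.val_natCast, ZMod.val_zero, Nat.mod_eq_of_lt hk] at h3
    exact one_ne_zero h3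

/-- Iterated Cauchy–Davenport: achievable-sum sets. -/
lemma exists_sumset_big {p : ℕ} (hp : p.Prime) {ι : Type} [DecidableEq ι]
    (s : Finset ι) (B : ι → Finset (ZMod p)) (hne : ∀ i ∈ s, (B i).Nonempty) :
    ∃ S : Finset (ZMod p), S.Nonempty ∧
      min p ((∑ i ∈ s, (B i).card) - (s.card - 1)) ≤ S.card ∧
      ∀ z ∈ S, ∃ f : ι → ZMod p, (∀ i ∈ s, f i ∈ B i) ∧ ∑ i ∈ s, f i = z := by
  induction s using Finset.cons_induction with
  | empty =>
    refine ⟨{0}, ⟨0, mem_singleton_self 0⟩, by simp, ?_⟩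
    intro z hz
    rw [mem_singleton] at hz
    exact ⟨fun _ => 0, by simp, by simp [hz.symm]⟩
  | cons a t ha IH =>
    obtain ⟨S, hSne, hScard, hSmem⟩ := IH (fun i hi => hne i (mem_cons_of_mem hi))
    have hBa : (B a).Nonempty := hne a (mem_cons_self a t)
    refine ⟨B a + S, hBa.add hSne, ?_, ?_⟩
    · have hcd := ZMod.cauchy_davenport hp hBa hSne
      have htc : t.card ≤ ∑ i ∈ t, (B i).card := by
        calc t.card = ∑ _i ∈ t, 1 := by simp
        _ ≤ ∑ i ∈ t, (B i).card := by
          refine Finset.sum_le_sum fun i hi => ?_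
          exact Finset.card_pos.mpr (hne i (mem_cons_of_mem hi))
      have hBa1 : 1 ≤ (B a).card := Finset.card_pos.mpr hBa
      have hS1 : 1 ≤ S.card := Finset.card_pos.mpr hSne
      have h00 : t.card = 0 → (∑ i ∈ t, (B i).card) = 0 := by
        intro h
        rw [Finset.card_eq_zero.mp h]
        simp
      rw [Finset.sum_cons, Finset.card_cons]
      revert hcd hScard htc hBa1 hS1 h00
      generalize (B a + S).card = bb
      generalize (B a).card = ca
      generalize S.card = cS
      generalize (∑ i ∈ t, (B i).card) = Tc
      generalize t.card = tc
      intro h1 h2 h3 h4 h5 h6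
      omega
    · intro z hz
      rw [Finset.mem_add] at hz
      obtain ⟨b, hb, y, hy, hby⟩ := hz
      obtain ⟨f, hf, hfs⟩ := hSmem y hy
      refine ⟨Function.update f a b, ?_, ?_⟩
      · intro i hi
        rcases Finset.mem_cons.mp hi with h1 | h1
        · subst h1; rw [Function.update_self]; exact hb
        · have hnea : i ≠ a := fun hh => ha (hh ▸ h1)
          rw [Function.update_of_ne hnea]
          exact hf i h1
      · rw [Finset.sum_cons, Function.update_self]
        have : ∑ i ∈ t, Function.update f a b i = ∑ i ∈ t, f i := by
          refine Finset.sum_congr rfl fun i hi => ?_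
          exact Function.update_of_ne (fun hh => ha (by rw [← hh]; exact hi)) _ _
        rw [this, hfs, hby]

lemma zmod_sum_range {k : ℕ} [NeZero k] {M : Type} [AddCommMonoid M] (g : ZMod k → M) :
    ∑ i : ZMod k, g i = ∑ l ∈ Finset.range k, g (l : ZMod k) := by
  rw [← Fin.sum_univ_eq_sum_range]
  refine (Fintype.sum_bijective (fun i : Fin k => ((i : ℕ) : ZMod k)) ?_ _ _ fun i => rfl).symm
  rw [Fintype.bijective_iff_injective_and_card]
  refine ⟨fun i j hij => ?_, by simp [ZMod.card]⟩
  have := congrArg ZMod.val hij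
  rw [ZMod.val_natCast, ZMod.val_natCast, Nat.mod_eq_of_lt i.isLt, Nat.mod_eq_of_lt j.isLt] at this
  exact Fin.ext this

lemma cyc_colorable {p k m : ℕ} (hp : p.Prime) [NeZero k] [NeZero m] (hk : 1 < k)
    (hm : m < p) (hb : p + (k - 1) ≤ k * (p - m)) :
    (cycGraph k m hk).GroupColorable (ZMod p) := by
  haveI : NeZero p := ⟨hp.pos.ne'⟩
  intro φ
  set A : ZMod k → Finset (ZMod p) :=
    fun i => (Finset.univ : Finset (Fin m)).image (fun j => φ (i, j)) with hA
  set B : ZMod k → Finset (ZMod p) := fun i => Finset.univ \ A i with hB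
  have hAcard : ∀ i, (A i).card ≤ m := fun i =>
    (Finset.card_image_le).trans (by simp)
  have hBcard : ∀ i, p - m ≤ (B i).card := by
    intro i
    have h1 : (B i).card = p - (A i).card := by
      show (Finset.univ \ A i).card = p - (A i).card
      rw [Finset.card_sdiff_of_subset (Finset.subset_univ _), Finset.card_univ, ZMod.card]
    have := hAcard i
    omega
  have hpm : 0 < p - m := by omega
  have hBne : ∀ i ∈ (Finset.univ : Finset (ZMod k)), (B i).Nonempty := by
    intro i _
    exact Finset.card_pos.mp (by have := hBcard i; omega)
  obtain ⟨S, hSne, hScard, hSmem⟩ := exists_sumset_big hp Finset.univ B hBne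
  have hsum_lb : k * (p - m) ≤ ∑ i : ZMod k, (B i).card := by
    calc k * (p - m) = ∑ _i : ZMod k, (p - m) := by
          rw [Finset.sum_const, Finset.card_univ, ZMod.card, smul_eq_mul]
    _ ≤ ∑ i : ZMod k, (B i).card := Finset.sum_le_sum fun i _ => hBcard i
  have hcardk : (Finset.univ : Finset (ZMod k)).card = k := by
    rw [Finset.card_univ, ZMod.card]
  have hSfull : S = Finset.univ := by
    have hle : S.card ≤ Fintype.card (ZMod p) := Finset.card_le_univ S
    have hcardp : Fintype.card (ZMod p) = p := ZMod.card p
    refine Finset.eq_univ_of_card _ ?_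
    rw [hcardk] at hScard
    obtain ⟨Q, hQ⟩ : ∃ x, k * (p - m) = x := ⟨_, rfl⟩
    rw [hQ] at hb hsum_lb
    omega
  obtain ⟨f, hf, hfs⟩ := hSmem 0 (hSfull ▸ Finset.mem_univ 0)
  have hfB : ∀ i, f i ∈ B i := fun i => hf i (Finset.mem_univ i)
  refine ⟨fun i => ∑ l ∈ Finset.range i.val, f (l : ZMod k), ?_⟩
  have hdiff : ∀ i : ZMod k,
      (∑ l ∈ Finset.range (i + 1).val, f (l : ZMod k))
        - (∑ l ∈ Finset.range i.val, f (l : ZMod k)) = f i := by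
    intro i
    have hival : i.val < k := ZMod.val_lt i
    have hcast : ((i.val : ℕ) : ZMod k) = i := ZMod.natCast_rightInverse i
    have hv1 : (i + 1).val = (i.val + 1) % k := by
      rw [ZMod.val_add]
      congr 1
      rw [show (1 : ZMod k) = ((1 : ℕ) : ZMod k) by rw [Nat.cast_one],
        ZMod.val_natCast, Nat.mod_eq_of_lt hk]
    by_cases hlt : i.val + 1 < k
    · rw [hv1, Nat.mod_eq_of_lt hlt, Finset.sum_range_succ, hcast, add_sub_cancel_left]
    · have hk1 : i.val + 1 = k := by omega
      have h0 : (i + 1).val = 0 := by rw [hv1, hk1, Nat.mod_self]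
      rw [h0]
      have hfull : ∑ l ∈ Finset.range k, f (l : ZMod k) = 0 := by
        rw [← zmod_sum_range]; exact hfs
      have hfull2 : ∑ l ∈ Finset.range (i.val + 1), f (l : ZMod k) = 0 := by
        rw [hk1]; exact hfull
      rw [Finset.sum_range_succ, hcast] at hfull2
      simp only [Finset.range_zero, Finset.sum_empty]
      linear_combination -hfull2
  rintro ⟨i, j⟩ hcontra
  have h1 : f i = φ (i, j) := by
    rw [← hdiff i]
    exact hcontra
  have h2 : f i ∉ A i := by
    have hh : f i ∈ Finset.univ \ A i := hfB i
    exact (Finset.mem_sdiff.mp hh).2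
  exact h2 (Finset.mem_image.mpr ⟨j, Finset.mem_univ j, h1.symm⟩)

lemma cyc_not_colorable {k m : ℕ} [NeZero k] [NeZero m] (hk : 1 < k) (hodd : k % 2 = 1) :
    ¬ (cycGraph k m hk).GroupColorable (ZMod 2 × ZMod m) := by
  intro h
  obtain ⟨c, hc⟩ := h (fun e => ((0 : ZMod 2), ((e.2 : ℕ) : ZMod m)))
  have hc' : ∀ (i : ZMod k) (j : Fin m),
      c (i + 1) - c i ≠ ((0 : ZMod 2), ((j : ℕ) : ZMod m)) := fun i j => hc (i, j)
  have h1 : ∀ i : ZMod k, (c (i + 1) - c i).1 = 1 := by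
    intro i
    set x := c (i + 1) - c i with hx
    have hcases : ∀ a : ZMod 2, a = 0 ∨ a = 1 := by decide
    rcases hcases x.1 with h0 | h1
    · exfalso
      refine hc' i ⟨x.2.val, ZMod.val_lt x.2⟩ ?_
      refine Prod.ext h0 ?_
      exact (ZMod.natCast_rightInverse x.2).symm
    · exact h1
  have h2 : ∑ i : ZMod k, (c (i + 1) - c i) = 0 := by
    refine (Finset.sum_sub_distrib ..).trans ?_
    have he : ∑ i : ZMod k, c (i + 1) = ∑ i : ZMod k, c i :=
      Fintype.sum_equiv (Equiv.addRight (1 : ZMod k)) _ _ fun i => rfl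
    rw [he, sub_self]
  have h3 : (0 : ZMod 2) = (k : ZMod 2) := by
    calc (0 : ZMod 2) = (∑ i : ZMod k, (c (i + 1) - c i)).1 := by rw [h2]; rfl
    _ = ∑ i : ZMod k, (c (i + 1) - c i).1 := Prod.fst_sum
    _ = ∑ _i : ZMod k, (1 : ZMod 2) := Finset.sum_congr rfl fun i _ => h1 i
    _ = (k : ZMod 2) := by
        rw [Finset.sum_const, Finset.card_univ, ZMod.card, nsmul_eq_mul, mul_one]
  have h4 : (k : ZMod 2) = 1 := by
    conv_lhs => rw [← Nat.mod_add_div k 2, hodd]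
    push_cast
    rw [show (2 : ZMod 2) = 0 by decide]
    ring
  rw [h4] at h3
  exact absurd h3 (by decide)

end Statement18Aux

set_option maxHeartbeats 1600000 in
/-- For every `ε > 0` there are infinitely many primes `p` for which some
graph `G` is `ℤ_p`-colorable but fails to be `Γ'`-colorable for some finite abelian
group `Γ'` with `|Γ'| ≥ (2 - ε)·p`. -/
theorem statement18 (ε : ℝ) (hε : 0 < ε) :
    {p : ℕ | p.Prime ∧
      ∃ (G : Multigraph) (Γ' : Type) (iΓ' : AddCommGroup Γ') (jΓ' : Fintype Γ'),
        (2 - ε) * (p : ℝ) ≤ (@Fintype.card Γ' jΓ' : ℝ) ∧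
        G.GroupColorable (ZMod p) ∧
        ¬ @Multigraph.GroupColorable G Γ' iΓ' }.Infinite := by
  obtain ⟨δ, hδpos, hδle, hδε⟩ : ∃ δ : ℝ, 0 < δ ∧ δ ≤ 1/2 ∧ δ ≤ ε :=
    ⟨min ε (1/2), lt_min hε (by norm_num), min_le_right _ _, min_le_left _ _⟩
  obtain ⟨k, hk, hkodd, hkδ⟩ : ∃ k : ℕ, 1 < k ∧ k % 2 = 1 ∧ (4 : ℝ) ≤ k * δ := by
    refine ⟨2 * ⌈(2 : ℝ)/δ⌉₊ + 1, ?_, by omega, ?_⟩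
    · have h1 : (2 : ℝ)/δ ≤ ⌈(2 : ℝ)/δ⌉₊ := Nat.le_ceil _
      have h2 : (4 : ℝ) ≤ (2 : ℝ)/δ := by rw [le_div_iff₀ hδpos]; linarith
      have h3 : (4 : ℝ) ≤ (⌈(2 : ℝ)/δ⌉₊ : ℝ) := le_trans h2 h1
      have h4 : 4 ≤ ⌈(2 : ℝ)/δ⌉₊ := by exact_mod_cast h3
      omega
    · have h1 : (2 : ℝ)/δ ≤ ⌈(2 : ℝ)/δ⌉₊ := Nat.le_ceil _
      rw [div_le_iff₀ hδpos] at h1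
      push_cast
      nlinarith
  haveI : NeZero k := ⟨by omega⟩
  refine Set.Infinite.mono ?_
    ((Nat.infinite_setOf_prime.diff (Set.finite_lt_nat (2 * k))))
  rintro p ⟨hp, hplt⟩
  simp only [Set.mem_setOf_eq, not_lt] at hplt
  have hp2 : 2 ≤ p := hp.two_le
  have hpk : 2 * k ≤ p := hplt
  have hkpos : (0 : ℝ) < k := by positivity
  have hpR : (2 : ℝ) * k ≤ p := by exact_mod_cast hpk
  have hδp : (2 : ℝ) ≤ δ * p := by nlinarith
  have hx0 : (0 : ℝ) ≤ (1 - δ/2) * p := by nlinarith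
  obtain ⟨m, hm_lb, hm_ub⟩ :
      ∃ m : ℕ, (1 - δ/2) * p ≤ m ∧ (m : ℝ) < (1 - δ/2) * p + 1 :=
    ⟨⌈(1 - δ/2) * p⌉₊, Nat.le_ceil _, Nat.ceil_lt_add_one hx0⟩
  have hmp : m < p := by
    have hδpk : (4 : ℝ) ≤ δ * p := by nlinarith
    have : (m : ℝ) < p := by nlinarith
    exact_mod_cast this
  have hm1 : 1 ≤ m := by
    by_contra hcon
    have hm0 : m = 0 := by omega
    rw [hm0] at hm_lb
    norm_num at hm_lb
    nlinarith
  haveI : NeZero m := ⟨by omega⟩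
  have hb : p + (k - 1) ≤ k * (p - m) := by
    have hcast : ((p + (k - 1) : ℕ) : ℝ) = p + k - 1 := by
      push_cast [Nat.cast_sub (by omega : 1 ≤ k)]
      ring
    have hcast2 : ((k * (p - m) : ℕ) : ℝ) = k * ((p : ℝ) - m) := by
      push_cast [Nat.cast_sub (le_of_lt hmp)]
      ring
    have hstep : ((p : ℝ) - m) ≥ δ * p / 2 - 1 := by nlinarith
    have h5 : (k : ℝ) * ((p : ℝ) - m) ≥ k * (δ * p / 2 - 1) := by nlinarith
    have hreal : (p : ℝ) + k - 1 ≤ k * ((p : ℝ) - m) := by nlinarith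
    rw [← Nat.cast_le (α := ℝ), hcast, hcast2]
    exact hreal
  refine ⟨hp, cycGraph k m hk, ZMod 2 × ZMod m, inferInstance, inferInstance, ?_, ?_, ?_⟩
  · have hcard : (Fintype.card (ZMod 2 × ZMod m) : ℝ) = 2 * m := by
      rw [Fintype.card_prod, ZMod.card, ZMod.card]
      push_cast
      ring
    rw [hcard]
    nlinarith
  · exact cyc_colorable hp hk hmp hb
  · exact cyc_not_colorable hk hkodd
end
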